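/- arXiv:1704.05562 — 5 statements merged into one kernel-verified Lean document; each statement's English description precedes it below -/
import Mathlib

section
/- The matrix logarithm is operator monotone: if A and B are positive definite matrices with A ≤ B, then log A ≤ log B. -/
open Matrix
open scoped ComplexOrder

/-- Matrix logarithm via the Hermitian functional calculus, with the convention
`Real.log 0 = 0` on the kernel (junk value `0` for non-Hermitian input). -/
noncomputable def mlog {n : ℕ} (A : Matrix (Fin n) (Fin n) ℂ) : Matrix (Fin n) (Fin n) ℂ :=
  if h : A.IsHermitian then h.cfc Real.log else 0

/-- Umegaki relative entropy `S(ρ,σ) = Tr(ρ (log ρ - log σ))` (real part of the trace). -/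
noncomputable def relEnt {n : ℕ} (ρ σ : Matrix (Fin n) (Fin n) ℂ) : ℝ :=
  ((ρ * (mlog ρ - mlog σ)).trace).re

/-- The support condition `supp ρ ≤ supp σ`, phrased as kernel containment
(`ker σ ⊆ ker ρ`), which is equivalent for positive semidefinite matrices. -/
def suppLE {n : ℕ} (ρ σ : Matrix (Fin n) (Fin n) ℂ) : Prop :=
  ∀ v : Fin n → ℂ, σ.mulVec v = 0 → ρ.mulVec v = 0


open Matrix
open scoped ComplexOrder

namespace LogMono

variable {n : ℕ} {A : Matrix (Fin n) (Fin n) ℂ}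

lemma mcfc_mul' (hA : A.IsHermitian) (f g : ℝ → ℝ) :
    hA.cfc f * hA.cfc g = hA.cfc (fun x => f x * g x) := by
  unfold Matrix.IsHermitian.cfc
  simp only [Unitary.conjStarAlgAut_apply]
  have key : ∀ (a b c d e f : Matrix (Fin n) (Fin n) ℂ),
      (a * b * c) * (d * e * f) = a * (b * (c * d) * e) * f := by
    intros; simp only [mul_assoc]
  rw [key]
  simp only [SetLike.coe_mem, Unitary.star_mul_self_of_mem, mul_one, diagonal_mul_diagonal]
  congr! with i
  simp

lemma mcfc_herm (hA : A.IsHermitian) (f : ℝ → ℝ) : (hA.cfc f).IsHermitian := by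
  rw [← hA.cfc_eq]
  have : IsSelfAdjoint (cfc f A) := cfc_predicate f A
  exact this

lemma mcfc_congr' (hA : A.IsHermitian) {f g : ℝ → ℝ}
    (h : ∀ i, f (hA.eigenvalues i) = g (hA.eigenvalues i)) : hA.cfc f = hA.cfc g := by
  have h2 : (RCLike.ofReal ∘ f ∘ hA.eigenvalues : Fin n → ℂ) = RCLike.ofReal ∘ g ∘ hA.eigenvalues := by
    ext i; simp [Function.comp, h i]
  unfold Matrix.IsHermitian.cfc
  rw [h2]

lemma mcfc_one' (hA : A.IsHermitian) : hA.cfc (fun _ => 1) = 1 := by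
  unfold Matrix.IsHermitian.cfc
  simp only [Unitary.conjStarAlgAut_apply]
  have : diagonal (RCLike.ofReal ∘ (fun _ : ℝ => (1:ℝ)) ∘ hA.eigenvalues) = (1 : Matrix (Fin n) (Fin n) ℂ) := by
    simp [Function.comp_def, diagonal_one]
  rw [this, mul_one]
  exact Unitary.coe_mul_star_self _

lemma mcfc_id' (hA : A.IsHermitian) : hA.cfc id = A := (hA.spectral_theorem).symm

lemma mcfc_sub' (hA : A.IsHermitian) (f g : ℝ → ℝ) :
    hA.cfc f - hA.cfc g = hA.cfc (fun x => f x - g x) := by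
  unfold Matrix.IsHermitian.cfc
  simp only [Unitary.conjStarAlgAut_apply]
  rw [← sub_mul, ← mul_sub, diagonal_sub]
  congr! with i
  simp

lemma mcfc_add' (hA : A.IsHermitian) (f g : ℝ → ℝ) :
    hA.cfc f + hA.cfc g = hA.cfc (fun x => f x + g x) := by
  unfold Matrix.IsHermitian.cfc
  simp only [Unitary.conjStarAlgAut_apply]
  rw [← add_mul, ← mul_add, diagonal_add]
  congr! with i
  simp

lemma mcfc_const' (hA : A.IsHermitian) (c : ℝ) : hA.cfc (fun _ => c) = (c : ℂ) • 1 := by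
  unfold Matrix.IsHermitian.cfc
  simp only [Unitary.conjStarAlgAut_apply]
  have : diagonal (RCLike.ofReal ∘ (fun _ : ℝ => c) ∘ hA.eigenvalues) = ((c:ℂ) • 1 : Matrix (Fin n) (Fin n) ℂ) := by
    rw [smul_eq_diagonal_mul, mul_one]
    congr! with i
  rw [this]
  rw [mul_smul_comm, smul_mul_assoc, mul_one]
  congr 1
  exact Unitary.coe_mul_star_self _





lemma quad (hA : A.IsHermitian) (f : ℝ → ℝ) (v : Fin n → ℂ) :
    star v ⬝ᵥ (hA.cfc f) *ᵥ v =
      ((∑ i, f (hA.eigenvalues i) *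
        ‖(star (hA.eigenvectorUnitary : Matrix (Fin n) (Fin n) ℂ) *ᵥ v) i‖ ^ 2 : ℝ) : ℂ) := by
  set U : Matrix (Fin n) (Fin n) ℂ := (hA.eigenvectorUnitary : Matrix (Fin n) (Fin n) ℂ) with hU
  set c : Fin n → ℂ := star U *ᵥ v with hc
  have hstar : star v ᵥ* U = star c := by
    rw [hc, star_mulVec, star_eq_conjTranspose, conjTranspose_conjTranspose]
  unfold Matrix.IsHermitian.cfc
  simp only [Unitary.conjStarAlgAut_apply]
  rw [← mulVec_mulVec, ← mulVec_mulVec, dotProduct_mulVec, hstar]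
  have : (star U *ᵥ v) = c := rfl
  rw [this]
  rw [dotProduct, Complex.ofReal_sum]
  refine Finset.sum_congr rfl fun i _ => ?_
  have h1 : (diagonal (RCLike.ofReal ∘ f ∘ hA.eigenvalues) *ᵥ c) i
      = (f (hA.eigenvalues i) : ℂ) * c i := mulVec_diagonal _ _ _
  rw [h1, Pi.star_apply]
  rw [show star (c i) * ((f (hA.eigenvalues i) : ℂ) * c i)
      = (f (hA.eigenvalues i) : ℂ) * ((starRingEnd ℂ) (c i) * c i) by
    simp [Complex.star_def]; ring]
  rw [Complex.conj_mul', Complex.ofReal_mul]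
  norm_cast






lemma mcfc_psd (hA : A.IsHermitian) {f : ℝ → ℝ}
    (h : ∀ i, 0 ≤ f (hA.eigenvalues i)) : (hA.cfc f).PosSemidef := by
  refine posSemidef_iff_dotProduct_mulVec.mpr ⟨mcfc_herm hA f, fun v => ?_⟩
  rw [quad hA f v]
  rw [Complex.zero_le_real]
  exact Finset.sum_nonneg fun i _ => mul_nonneg (h i) (sq_nonneg _)

/-- eigenvalue upper bound from `1 - A` psd -/
lemma eig_le_one (hA : A.IsHermitian) (h : ((1 : Matrix (Fin n) (Fin n) ℂ) - A).PosSemidef)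
    (i : Fin n) : hA.eigenvalues i ≤ 1 := by
  set U : Matrix (Fin n) (Fin n) ℂ := (hA.eigenvectorUnitary : Matrix (Fin n) (Fin n) ℂ) with hU
  set v : Fin n → ℂ := fun k => U k i with hv
  have hUc : star U *ᵥ v = fun j => (star U * U) j i := by
    ext j; simp [hv, mulVec, mul_apply, dotProduct]
  have hUU : star U * U = 1 := by
    exact Unitary.star_mul_self_of_mem (SetLike.coe_mem _)
  have hc : star U *ᵥ v = fun j => (1 : Matrix (Fin n) (Fin n) ℂ) j i := by rw [hUc, hUU]
  have hquad : ∀ f : ℝ → ℝ, star v ⬝ᵥ (hA.cfc f) *ᵥ v = ((f (hA.eigenvalues i) : ℝ) : ℂ) := by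
    intro f
    rw [quad hA f v, hc]
    congr 1
    rw [Finset.sum_eq_single i]
    · simp [Matrix.one_apply]
    · intro j _ hj; simp [Matrix.one_apply, hj]
    · intro hi; exact absurd (Finset.mem_univ i) hi
  have h1 : star v ⬝ᵥ A *ᵥ v = ((hA.eigenvalues i : ℝ) : ℂ) := by
    have := hquad id
    rwa [mcfc_id' hA] at this
  have h2 : star v ⬝ᵥ (1 : Matrix (Fin n) (Fin n) ℂ) *ᵥ v = ((1 : ℝ) : ℂ) := by
    have := hquad (fun _ => 1)
    rwa [mcfc_one' hA] at this
  have := (posSemidef_iff_dotProduct_mulVec.mp h).2 v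
  rw [sub_mulVec, dotProduct_sub, h1, h2, ← Complex.ofReal_sub, Complex.zero_le_real] at this
  linarith


section S3
variable {X Y : Matrix (Fin n) (Fin n) ℂ}

lemma mcfc_inv' (hX : X.PosDef) : X⁻¹ = hX.1.cfc (fun x => x⁻¹) := by
  apply Matrix.inv_eq_right_inv
  have h : hX.1.cfc id * hX.1.cfc (fun x => x⁻¹) = 1 := by
    rw [mcfc_mul' hX.1]
    rw [mcfc_congr' hX.1 (g := fun _ => 1) (fun i => by
      have := hX.eigenvalues_pos i
      simp only [id_eq]
      field_simp), mcfc_one']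
  rwa [mcfc_id' hX.1] at h

lemma inv_antitone (hX : X.PosDef) (hY : Y.PosDef) (hXY : (Y - X).PosSemidef) :
    (X⁻¹ - Y⁻¹).PosSemidef := by
  set hYh : Y.IsHermitian := hY.1
  set C : Matrix (Fin n) (Fin n) ℂ := hYh.cfc (fun x => (Real.sqrt x)⁻¹) with hCdef
  set S : Matrix (Fin n) (Fin n) ℂ := hYh.cfc Real.sqrt with hSdef
  have sqrt_pos : ∀ i, 0 < Real.sqrt (hYh.eigenvalues i) :=
    fun i => Real.sqrt_pos.mpr (hY.eigenvalues_pos i)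
  have hCS : C * S = 1 := by
    rw [hCdef, hSdef, mcfc_mul' hYh,
      mcfc_congr' hYh (g := fun _ => 1) (fun i => inv_mul_cancel₀ (sqrt_pos i).ne'), mcfc_one']
  have hSC : S * C = 1 := by
    rw [hCdef, hSdef, mcfc_mul' hYh,
      mcfc_congr' hYh (g := fun _ => 1) (fun i => mul_inv_cancel₀ (sqrt_pos i).ne'), mcfc_one']
  have hCherm : C.IsHermitian := mcfc_herm hYh _
  have hCYC : C * Y * C = 1 := by
    conv_lhs => rw [← mcfc_id' hYh]
    rw [hCdef, mcfc_mul' hYh, mcfc_mul' hYh,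
      mcfc_congr' hYh (g := fun _ => 1) (fun i => by
        have h1 := hY.eigenvalues_pos i
        have h2 := Real.sq_sqrt h1.le
        have h3 := sqrt_pos i
        simp only [id_eq]
        field_simp
        exact h2.symm), mcfc_one']
  set M : Matrix (Fin n) (Fin n) ℂ := C * X * C with hMdef
  have hMpsd : M.PosSemidef := by
    have := hX.posSemidef.mul_mul_conjTranspose_same C
    rwa [hCherm.eq] at this
  have hMherm : M.IsHermitian := hMpsd.1
  have hCinj : ∀ v : Fin n → ℂ, C *ᵥ v = 0 → v = 0 := by
    intro v hv
    have : (S * C) *ᵥ v = S *ᵥ (C *ᵥ v) := (mulVec_mulVec v S C).symm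
    rw [hSC, one_mulVec, hv, mulVec_zero] at this
    exact this
  have hMpd : M.PosDef := by
    refine posDef_iff_dotProduct_mulVec.mpr ⟨hMherm, fun v hv => ?_⟩
    have hCv : C *ᵥ v ≠ 0 := fun h => hv (hCinj v h)
    have hrw : star v ⬝ᵥ M *ᵥ v = star (C *ᵥ v) ⬝ᵥ X *ᵥ (C *ᵥ v) := by
      have h4 : star v ᵥ* C = star (C *ᵥ v) := by rw [star_mulVec, hCherm.eq]
      rw [hMdef, ← mulVec_mulVec, ← mulVec_mulVec, dotProduct_mulVec, h4]
    rw [hrw]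
    exact (posDef_iff_dotProduct_mulVec.mp hX).2 hCv
  have h1M : ((1 : Matrix (Fin n) (Fin n) ℂ) - M).PosSemidef := by
    have key : (1 : Matrix (Fin n) (Fin n) ℂ) - M = C * (Y - X) * C := by
      rw [hMdef, Matrix.mul_sub, Matrix.sub_mul, hCYC]
    rw [key]
    have := hXY.mul_mul_conjTranspose_same C
    rwa [hCherm.eq] at this
  set N : Matrix (Fin n) (Fin n) ℂ := hMherm.cfc (fun x => x⁻¹) with hNdef
  have hMN : M * N = 1 := by
    conv_lhs => rw [← mcfc_id' hMherm]
    rw [hNdef, mcfc_mul' hMherm,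
      mcfc_congr' hMherm (g := fun _ => 1) (fun i =>
        mul_inv_cancel₀ (hMpd.eigenvalues_pos i).ne'), mcfc_one']
  have hN1 : (N - 1).PosSemidef := by
    rw [hNdef, ← mcfc_one' hMherm, mcfc_sub' hMherm]
    apply mcfc_psd
    intro i
    have h1 := hMpd.eigenvalues_pos i
    have h2 := eig_le_one hMherm h1M i
    have : (1:ℝ) ≤ (hMherm.eigenvalues i)⁻¹ := (one_le_inv₀ h1).mpr h2
    linarith
  have hXeq : S * M * S = X := by
    rw [hMdef]
    calc S * (C * X * C) * S = S * C * X * (C * S) := by simp only [mul_assoc]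
    _ = X := by rw [hSC, hCS, one_mul, mul_one]
  have hXinv : X⁻¹ = C * N * C := by
    apply Matrix.inv_eq_right_inv
    rw [← hXeq]
    calc S * M * S * (C * N * C) = S * M * (S * C) * N * C := by simp only [mul_assoc]
    _ = S * (M * N) * C := by rw [hSC]; simp only [mul_assoc, one_mul]
    _ = 1 := by rw [hMN, mul_one, hSC]
  have hYinv : Y⁻¹ = C * C := by
    apply Matrix.inv_eq_right_inv
    conv_lhs => rw [← mcfc_id' hYh]
    rw [hCdef, mcfc_mul' hYh, mcfc_mul' hYh,
      mcfc_congr' hYh (g := fun _ => 1) (fun i => by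
        have h1 := hY.eigenvalues_pos i
        have h2 := Real.sq_sqrt h1.le
        have h3 := sqrt_pos i
        simp only [id_eq]
        field_simp
        exact h2.symm), mcfc_one']
  have key : X⁻¹ - Y⁻¹ = C * (N - 1) * C := by
    rw [hXinv, hYinv, Matrix.mul_sub, Matrix.sub_mul, mul_one]
  rw [key]
  have := hN1.mul_mul_conjTranspose_same C
  rwa [hCherm.eq] at this

end S3

section S4
open MeasureTheory Set Filter
open scoped Topology


lemma ilog_integrable {l : ℝ} (hl : 0 < l) :
    IntegrableOn (fun t : ℝ => (1 + t)⁻¹ - (l + t)⁻¹) (Ioi 0) := by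
  have hcont : ContinuousOn (fun t : ℝ => (1 + t)⁻¹ - (l + t)⁻¹) (Ici 0) := by
    apply ContinuousOn.sub
    · exact ContinuousOn.inv₀ (by fun_prop) (fun t ht => by
        have : (0:ℝ) ≤ t := ht
        positivity)
    · exact ContinuousOn.inv₀ (by fun_prop) (fun t ht => by
        have : (0:ℝ) ≤ t := ht
        positivity)
  have h1 : IntegrableOn (fun t : ℝ => (1 + t)⁻¹ - (l + t)⁻¹) (Ioc 0 1) :=
    ((hcont.mono (Icc_subset_Ici_self : Icc (0:ℝ) 1 ⊆ Ici 0)).integrableOn_compact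
      isCompact_Icc).mono_set Ioc_subset_Icc_self
  have h2 : IntegrableOn (fun t : ℝ => (1 + t)⁻¹ - (l + t)⁻¹) (Ioi 1) := by
    have hig : IntegrableOn (fun t : ℝ => |1 - l| * t ^ (-2 : ℝ)) (Ioi 1) :=
      (integrableOn_Ioi_rpow_of_lt (by norm_num) one_pos).const_mul _
    apply Integrable.mono' hig
    · exact (hcont.mono (Ioi_subset_Ici (by norm_num))).aestronglyMeasurable measurableSet_Ioi
    · filter_upwards [ae_restrict_mem measurableSet_Ioi] with t ht
      have ht1 : (1:ℝ) < t := ht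
      have ht0 : (0:ℝ) < t := by linarith
      have e1 : (1 + t)⁻¹ - (l + t)⁻¹ = (l - 1) / ((1 + t) * (l + t)) := by
        field_simp
        ring
      rw [e1, Real.rpow_neg ht0.le, Real.norm_eq_abs, abs_div]
      rw [show (2:ℝ) = ((2:ℕ):ℝ) by norm_num, Real.rpow_natCast]
      have hd : (0:ℝ) < (1 + t) * (l + t) := by positivity
      rw [abs_of_pos hd]
      have h5 : t ^ 2 ≤ (1 + t) * (l + t) := by nlinarith
      have h6 : |l - 1| / ((1+t)*(l+t)) ≤ |l-1| / t^2 := by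
        apply div_le_div_of_nonneg_left (abs_nonneg _) (by positivity) h5
      calc |l - 1| / ((1+t)*(l+t)) ≤ |l-1| / t^2 := h6
        _ = |1 - l| * (t ^ 2)⁻¹ := by rw [abs_sub_comm, div_eq_mul_inv]
  have := h1.union h2
  rwa [Ioc_union_Ioi_eq_Ioi (by norm_num : (0:ℝ) ≤ 1)] at this

lemma ilog {l : ℝ} (hl : 0 < l) :
    ∫ t in Ioi (0:ℝ), ((1 + t)⁻¹ - (l + t)⁻¹) = Real.log l := by
  have hderiv : ∀ x ∈ Ici (0:ℝ), HasDerivAt (fun t => Real.log (1 + t) - Real.log (l + t))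
      ((1 + x)⁻¹ - (l + x)⁻¹) x := by
    intro x hx
    have hx0 : (0:ℝ) ≤ x := hx
    have h1 : HasDerivAt (fun t : ℝ => Real.log (1 + t)) (1 + x)⁻¹ x := by
      have := (Real.hasDerivAt_log (by positivity : (1:ℝ) + x ≠ 0)).comp x
        ((hasDerivAt_id x).const_add 1)
      simpa [Function.comp_def] using this
    have h2 : HasDerivAt (fun t : ℝ => Real.log (l + t)) (l + x)⁻¹ x := by
      have := (Real.hasDerivAt_log (by positivity : l + x ≠ 0)).comp x
        ((hasDerivAt_id x).const_add l)
      simpa [Function.comp_def] using this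
    exact h1.sub h2
  have htends : Tendsto (fun t => Real.log (1 + t) - Real.log (l + t)) atTop (𝓝 0) := by
    have key : ∀ᶠ t in atTop, Real.log (1 + t) - Real.log (l + t) = Real.log ((1 + t) / (l + t)) := by
      filter_upwards [eventually_gt_atTop 0] with t ht
      rw [Real.log_div (by positivity) (by positivity)]
    rw [tendsto_congr' key]
    have hratio : Tendsto (fun t : ℝ => (1 + t) / (l + t)) atTop (𝓝 1) := by
      have : (fun t : ℝ => (1 + t) / (l + t)) =ᶠ[atTop] fun t => (1/t + 1) / (l/t + 1) := by
        filter_upwards [eventually_gt_atTop 0] with t ht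
        field_simp
      rw [tendsto_congr' this]
      have h1 : Tendsto (fun t : ℝ => 1/t + 1) atTop (𝓝 1) := by
        simpa using (tendsto_const_nhds.div_atTop tendsto_id (f := fun _:ℝ => (1:ℝ))).add
          (tendsto_const_nhds (x := (1:ℝ)))
      have h2 : Tendsto (fun t : ℝ => l/t + 1) atTop (𝓝 1) := by
        simpa using (tendsto_const_nhds.div_atTop tendsto_id (f := fun _:ℝ => l)).add
          (tendsto_const_nhds (x := (1:ℝ)))
      have h12 := h1.div h2 (by norm_num)
      rw [div_one] at h12
      exact h12
    have := hratio.comp (tendsto_id (α := ℝ))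
    simpa [Function.comp_def] using (Real.continuousAt_log (by norm_num)).tendsto.comp hratio
  have := integral_Ioi_of_hasDerivAt_of_tendsto' hderiv (ilog_integrable hl) htends
  rw [this]
  simp [Real.log_one]


variable {B : Matrix (Fin n) (Fin n) ℂ}

lemma psd_smul_one {t : ℝ} (ht : 0 ≤ t) :
    ((t:ℂ) • (1 : Matrix (Fin n) (Fin n) ℂ)).PosSemidef := by
  have h : ((t:ℂ) • (1 : Matrix (Fin n) (Fin n) ℂ)) = Matrix.diagonal (fun _ => (t:ℂ)) := by
    ext i j
    by_cases hij : i = j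
    · subst hij; simp
    · simp [Matrix.one_apply_ne hij, diagonal_apply_ne _ hij]
  rw [h]
  exact Matrix.PosSemidef.diagonal (fun i => Complex.zero_le_real.mpr ht)

lemma shift_cfc (hA : A.IsHermitian) (t : ℝ) :
    hA.cfc (fun x => x + t) = A + (t:ℂ) • 1 := by
  have h := mcfc_add' hA id (fun _ => t)
  rw [mcfc_id' hA, mcfc_const' hA] at h
  simp only [id_eq] at h
  exact h.symm

lemma shift_posdef (hA : A.PosDef) {t : ℝ} (ht : 0 < t) :
    (A + (t:ℂ) • 1).PosDef :=
  hA.add_posSemidef (psd_smul_one ht.le)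

lemma shift_inv (hA : A.PosDef) {t : ℝ} (ht : 0 < t) :
    (A + (t:ℂ) • 1)⁻¹ = hA.1.cfc (fun x => (x + t)⁻¹) := by
  apply Matrix.inv_eq_left_inv
  rw [← shift_cfc hA.1 t, mcfc_mul' hA.1,
    mcfc_congr' hA.1 (g := fun _ => 1) (fun i => by
      have h1 := hA.eigenvalues_pos i
      have h2 : 0 < hA.1.eigenvalues i + t := by linarith
      field_simp), mcfc_one']

lemma key (hA : A.PosDef) (hB : B.PosDef) (hAB : (B - A).PosSemidef) (v : Fin n → ℂ) :
    ∑ i, Real.log (hA.1.eigenvalues i) *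
        ‖(star (hA.1.eigenvectorUnitary : Matrix (Fin n) (Fin n) ℂ) *ᵥ v) i‖ ^ 2
      ≤ ∑ j, Real.log (hB.1.eigenvalues j) *
        ‖(star (hB.1.eigenvectorUnitary : Matrix (Fin n) (Fin n) ℂ) *ᵥ v) j‖ ^ 2 := by
  set wA : Fin n → ℝ := fun i =>
    ‖(star (hA.1.eigenvectorUnitary : Matrix (Fin n) (Fin n) ℂ) *ᵥ v) i‖ ^ 2 with hwA
  set wB : Fin n → ℝ := fun j =>
    ‖(star (hB.1.eigenvectorUnitary : Matrix (Fin n) (Fin n) ℂ) *ᵥ v) j‖ ^ 2 with hwB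
  have hwAnn : ∀ i, 0 ≤ wA i := fun i => sq_nonneg _
  have hwBnn : ∀ j, 0 ≤ wB j := fun j => sq_nonneg _
  have hW : ∑ i, wA i = ∑ j, wB j := by
    have h1 := quad hA.1 (fun _ => 1) v
    have h2 := quad hB.1 (fun _ => 1) v
    rw [mcfc_one' hA.1] at h1
    rw [mcfc_one' hB.1] at h2
    rw [h1] at h2
    have := Complex.ofReal_inj.mp h2
    simpa using this
  set lam : Fin n → ℝ := hA.1.eigenvalues with hlam
  set mu : Fin n → ℝ := hB.1.eigenvalues with hmu
  have hlampos : ∀ i, 0 < lam i := hA.eigenvalues_pos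
  have hmupos : ∀ j, 0 < mu j := hB.eigenvalues_pos
  set fA : ℝ → ℝ := fun t => ∑ i, wA i * ((1 + t)⁻¹ - (lam i + t)⁻¹) with hfA
  set fB : ℝ → ℝ := fun t => ∑ j, wB j * ((1 + t)⁻¹ - (mu j + t)⁻¹) with hfB
  have intA : IntegrableOn fA (Ioi 0) :=
    integrable_finset_sum _ (fun i _ => (ilog_integrable (hlampos i)).const_mul (wA i))
  have intB : IntegrableOn fB (Ioi 0) :=
    integrable_finset_sum _ (fun j _ => (ilog_integrable (hmupos j)).const_mul (wB j))
  have eqA : ∫ t in Ioi (0:ℝ), fA t = ∑ i, wA i * Real.log (lam i) := by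
    rw [hfA]
    rw [MeasureTheory.integral_finset_sum _
      (fun i _ => (ilog_integrable (hlampos i)).const_mul (wA i))]
    exact Finset.sum_congr rfl fun i _ => by
      rw [MeasureTheory.integral_const_mul, ilog (hlampos i)]
  have eqB : ∫ t in Ioi (0:ℝ), fB t = ∑ j, wB j * Real.log (mu j) := by
    rw [hfB]
    rw [MeasureTheory.integral_finset_sum _
      (fun j _ => (ilog_integrable (hmupos j)).const_mul (wB j))]
    exact Finset.sum_congr rfl fun j _ => by
      rw [MeasureTheory.integral_const_mul, ilog (hmupos j)]
  have hnn : ∀ t ∈ Ioi (0:ℝ), 0 ≤ fB t - fA t := by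
    intro t ht
    have ht0 : (0:ℝ) < t := ht
    have hXpd := shift_posdef hA ht0
    have hYpd := shift_posdef hB ht0
    have hYX : ((B + (t:ℂ) • 1) - (A + (t:ℂ) • 1)).PosSemidef := by
      have e : (B + (t:ℂ) • 1) - (A + (t:ℂ) • 1) = B - A := by abel
      rw [e]; exact hAB
    have hmono := (posSemidef_iff_dotProduct_mulVec.mp (inv_antitone hXpd hYpd hYX)).2 v
    rw [sub_mulVec, dotProduct_sub, shift_inv hA ht0, shift_inv hB ht0,
      quad hA.1 _ v, quad hB.1 _ v, ← Complex.ofReal_sub, Complex.zero_le_real] at hmono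
    have expand : fB t - fA t =
        (∑ i, (lam i + t)⁻¹ * wA i) - ∑ j, (mu j + t)⁻¹ * wB j := by
      rw [hfB, hfA]
      simp only [mul_sub]
      rw [Finset.sum_sub_distrib, Finset.sum_sub_distrib]
      have e1 : ∑ j, wB j * (1 + t)⁻¹ = ∑ i, wA i * (1 + t)⁻¹ := by
        rw [← Finset.sum_mul, ← Finset.sum_mul, hW]
      rw [e1]
      have e2 : ∀ (w : Fin n → ℝ) (l : Fin n → ℝ),
          ∑ i, w i * (l i + t)⁻¹ = ∑ i, (l i + t)⁻¹ * w i :=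
        fun w l => Finset.sum_congr rfl fun i _ => mul_comm _ _
      rw [e2 wA lam, e2 wB mu]
      ring
    rw [expand]
    convert hmono using 2
  have hint : (0:ℝ) ≤ ∫ t in Ioi (0:ℝ), (fB t - fA t) :=
    setIntegral_nonneg measurableSet_Ioi hnn
  rw [MeasureTheory.integral_sub intB intA, eqA, eqB] at hint
  have e3 : ∀ (w : Fin n → ℝ) (l : Fin n → ℝ),
      ∑ i, Real.log (l i) * w i = ∑ i, w i * Real.log (l i) :=
    fun w l => Finset.sum_congr rfl fun i _ => mul_comm _ _
  rw [e3 wA lam, e3 wB mu]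
  linarith

end S4
end LogMono

/-- Operator monotonicity of the matrix logarithm: if A, B are positive
definite and A ≤ B, then log A ≤ log B. -/
theorem stmt2 {n : ℕ} (A B : Matrix (Fin n) (Fin n) ℂ)
    (hA : A.PosDef) (hB : B.PosDef) (hAB : (B - A).PosSemidef) :
    (mlog B - mlog A).PosSemidef := by
  have hlogA : mlog A = hA.1.cfc Real.log := by unfold mlog; rw [dif_pos hA.1]
  have hlogB : mlog B = hB.1.cfc Real.log := by unfold mlog; rw [dif_pos hB.1]
  rw [hlogA, hlogB]
  refine posSemidef_iff_dotProduct_mulVec.mpr ⟨(LogMono.mcfc_herm hB.1 _).sub (LogMono.mcfc_herm hA.1 _), fun v => ?_⟩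
  rw [sub_mulVec, dotProduct_sub, LogMono.quad hA.1 _ v, LogMono.quad hB.1 _ v,
    ← Complex.ofReal_sub, Complex.zero_le_real, sub_nonneg]
  exact LogMono.key hA hB hAB v
end

section
/- Let E : M → N be a linear map between two finite-dimensional C*-algebras with N ⊆ M, satisfying E(X) ≥ λX for all positive X ∈ M and some λ > 0. Then for any density matrix (state) ρ on M with S(ρ, ρ∘E) < ∞, the relative entropy satisfies S(ρ, ρ∘E) ≤ log(1/λ). -/
open Matrix
open scoped ComplexOrder

namespace Stmt6Aux

variable {m : ℕ}

lemma trace_nonneg_of_psd {A : Matrix (Fin m) (Fin m) ℂ} (hA : A.PosSemidef) :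
    0 ≤ A.trace := by
  rw [Matrix.trace]
  refine Finset.sum_nonneg fun i _ => ?_
  simpa [dotProduct, Matrix.mulVec, Pi.single_apply, apply_ite (starRingEnd ℂ)]
    using hA.dotProduct_mulVec_nonneg (Pi.single i 1)

lemma trace_mul_nonneg {A B : Matrix (Fin m) (Fin m) ℂ} (hA : A.PosSemidef)
    (hB : B.PosSemidef) : 0 ≤ (A * B).trace := by
  obtain ⟨k, v, rfl⟩ := Matrix.posSemidef_iff_eq_sum_vecMulVec.mp hA
  rw [Finset.sum_mul, Matrix.trace_sum]
  refine Finset.sum_nonneg fun i _ => ?_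
  rw [Matrix.vecMulVec_mul, Matrix.trace_vecMulVec, dotProduct_comm, ← Matrix.dotProduct_mulVec]
  exact hB.dotProduct_mulVec_nonneg (v i)

lemma dot_eq_trace (A : Matrix (Fin m) (Fin m) ℂ) (x : Fin m → ℂ) :
    star x ⬝ᵥ A *ᵥ x = (A * Matrix.vecMulVec x (star x)).trace := by
  simp only [Matrix.trace, Matrix.diag, Matrix.mul_apply, Matrix.vecMulVec_apply,
    dotProduct, Matrix.mulVec, Pi.star_apply]
  refine Finset.sum_congr rfl fun k _ => ?_
  rw [Finset.mul_sum]
  refine Finset.sum_congr rfl fun l _ => ?_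
  ring

lemma posSemidef_outer (x : Fin m → ℂ) : (Matrix.vecMulVec x (star x)).PosSemidef := by
  refine Matrix.PosSemidef.of_dotProduct_mulVec_nonneg ?_ ?_
  · ext i j
    simp [Matrix.conjTranspose_apply, Matrix.vecMulVec_apply, mul_comm]
  · intro y
    have : star y ⬝ᵥ (Matrix.vecMulVec x (star x)) *ᵥ y
        = star (star x ⬝ᵥ y) * (star x ⬝ᵥ y) := by
      simp only [dotProduct, Matrix.mulVec, Matrix.vecMulVec_apply, Pi.star_apply,
        star_sum, star_mul', star_star, Finset.mul_sum, Finset.sum_mul]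
      rw [Finset.sum_comm]
      refine Finset.sum_congr rfl fun k _ => ?_
      refine Finset.sum_congr rfl fun l _ => ?_
      ring
    rw [this]
    exact star_mul_self_nonneg _

lemma cfc_psd {A : Matrix (Fin m) (Fin m) ℂ} (hA : A.IsHermitian) (f : ℝ → ℝ)
    (hf : ∀ r, 0 ≤ f r) : (hA.cfc f).PosSemidef := by
  rw [Matrix.IsHermitian.cfc, Unitary.conjStarAlgAut_apply,
    Matrix.star_eq_conjTranspose]
  refine Matrix.PosSemidef.mul_mul_conjTranspose_same ?_ _
  exact Matrix.PosSemidef.diagonal fun i => Complex.zero_le_real.mpr (hf _)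

lemma cfc_sub {A : Matrix (Fin m) (Fin m) ℂ} (hA : A.IsHermitian) (f g : ℝ → ℝ) :
    hA.cfc f - hA.cfc g = hA.cfc (fun x => f x - g x) := by
  simp only [Matrix.IsHermitian.cfc, Unitary.conjStarAlgAut_apply]
  rw [← Matrix.sub_mul, ← Matrix.mul_sub, Matrix.diagonal_sub]
  congr 2
  ext i j
  rcases eq_or_ne i j with rfl | hij
  · rw [Matrix.diagonal_apply_eq, Matrix.diagonal_apply_eq]
    simp
  · rw [Matrix.diagonal_apply_ne _ hij, Matrix.diagonal_apply_ne _ hij]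

lemma cfc_id {A : Matrix (Fin m) (Fin m) ℂ} (hA : A.IsHermitian) :
    hA.cfc (fun x => x) = A := by
  rw [Matrix.IsHermitian.cfc]
  exact hA.spectral_theorem.symm

lemma herm_decomp {A : Matrix (Fin m) (Fin m) ℂ} (hA : A.IsHermitian) :
    ∃ P Q : Matrix (Fin m) (Fin m) ℂ, P.PosSemidef ∧ Q.PosSemidef ∧ A = P - Q := by
  refine ⟨hA.cfc (fun x => max x 0), hA.cfc (fun x => max (-x) 0),
    cfc_psd hA _ (fun r => le_max_right _ _), cfc_psd hA _ (fun r => le_max_right _ _), ?_⟩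
  rw [cfc_sub]
  have : (fun x : ℝ => max x 0 - max (-x) 0) = fun x : ℝ => x := by
    ext x
    rcases le_total x 0 with h | h
    · rw [max_eq_right h, max_eq_left (by linarith)]; ring
    · rw [max_eq_left h, max_eq_right (by linarith)]; ring
  rw [this, cfc_id]

lemma map_herm (E : Matrix (Fin m) (Fin m) ℂ →ₗ[ℂ] Matrix (Fin m) (Fin m) ℂ)
    (hpos : ∀ X : Matrix (Fin m) (Fin m) ℂ, X.PosSemidef → (E X).PosSemidef)
    {H : Matrix (Fin m) (Fin m) ℂ} (hH : H.IsHermitian) : (E H).IsHermitian := by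
  obtain ⟨P, Q, hP, hQ, rfl⟩ := herm_decomp hH
  rw [map_sub]
  exact (hpos P hP).1.sub (hpos Q hQ).1

lemma map_star (E : Matrix (Fin m) (Fin m) ℂ →ₗ[ℂ] Matrix (Fin m) (Fin m) ℂ)
    (hpos : ∀ X : Matrix (Fin m) (Fin m) ℂ, X.PosSemidef → (E X).PosSemidef)
    (X : Matrix (Fin m) (Fin m) ℂ) : E Xᴴ = (E X)ᴴ := by
  obtain ⟨H, hHdef⟩ : ∃ Y, Y = ((2:ℂ)⁻¹ • (X + Xᴴ)) := ⟨_, rfl⟩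
  obtain ⟨K, hKdef⟩ : ∃ Y, Y = ((-(2:ℂ)⁻¹ * Complex.I) • (X - Xᴴ)) := ⟨_, rfl⟩
  have hH : H.IsHermitian := by
    rw [Matrix.IsHermitian, hHdef, Matrix.conjTranspose_smul, Matrix.conjTranspose_add,
      Matrix.conjTranspose_conjTranspose,
      show star ((2:ℂ)⁻¹) = (2:ℂ)⁻¹ by simp, add_comm]
  have hK : K.IsHermitian := by
    rw [Matrix.IsHermitian, hKdef, Matrix.conjTranspose_smul, Matrix.conjTranspose_sub,
      Matrix.conjTranspose_conjTranspose,
      show star (-(2:ℂ)⁻¹ * Complex.I) = (2:ℂ)⁻¹ * Complex.I by simp,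
      show (Xᴴ - X) = -(X - Xᴴ) from (neg_sub X Xᴴ).symm, smul_neg, ← neg_smul, neg_mul]
  have hXeq : X = H + Complex.I • K := by
    rw [hHdef, hKdef, smul_smul,
      show Complex.I * (-(2:ℂ)⁻¹ * Complex.I) = (2:ℂ)⁻¹ by
        rw [mul_comm, mul_assoc, Complex.I_mul_I]; ring]
    module
  have hXH : Xᴴ = H - Complex.I • K := by
    conv_lhs => rw [hXeq]
    rw [Matrix.conjTranspose_add, Matrix.conjTranspose_smul, hH, hK,
      show star Complex.I = -Complex.I by simp, neg_smul, ← sub_eq_add_neg]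
  rw [hXH, map_sub, LinearMap.map_smul]
  conv_rhs => rw [hXeq]
  rw [map_add, LinearMap.map_smul, Matrix.conjTranspose_add, Matrix.conjTranspose_smul,
    map_herm E hpos hH, map_herm E hpos hK,
    show star Complex.I = -Complex.I by simp, neg_smul, ← sub_eq_add_neg]

lemma eq_of_traces {A B : Matrix (Fin m) (Fin m) ℂ}
    (h : ∀ X, (A * X).trace = (B * X).trace) : A = B := by
  have key : ∀ (C : Matrix (Fin m) (Fin m) ℂ) (i j : Fin m),
      (C * Matrix.single j i (1:ℂ)).trace = C i j := by
    intro C i j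
    rw [Matrix.trace, Finset.sum_eq_single i]
    · simp
    · intro b _ hb
      simp [Matrix.diag, hb]
    · simp
  ext i j
  have := h (Matrix.single j i 1)
  rwa [key, key] at this

lemma jensen_aux {lam pp : ℝ} (hlam : 0 < lam) (hpp : 0 < pp)
    {q c : Fin m → ℝ} (hq : ∀ j, 0 ≤ q j) (hc : ∀ j, 0 ≤ c j)
    (hc1 : ∑ j, c j = 1) (hcq : ∀ j, q j = 0 → c j = 0)
    (ht : lam * pp * (∑ j, if q j = 0 then 0 else c j / q j) ^ 2
      ≤ ∑ j, if q j = 0 then 0 else c j / q j) :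
    Real.log lam + Real.log pp ≤ ∑ j, c j * Real.log (q j) := by
  classical
  set t : ℝ := ∑ j, if q j = 0 then 0 else c j / q j with htdef
  set S : Finset (Fin m) := Finset.univ.filter (fun j => q j ≠ 0) with hSdef
  have hq' : ∀ j ∈ S, 0 < q j := by
    intro j hj
    rw [hSdef, Finset.mem_filter] at hj
    exact lt_of_le_of_ne (hq j) (Ne.symm hj.2)
  have hcS : ∑ j ∈ S, c j = 1 := by
    rw [← hc1]
    apply Finset.sum_subset (Finset.subset_univ S)
    intro j _ hj
    rw [hSdef, Finset.mem_filter] at hj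
    push_neg at hj
    exact hcq j (hj (Finset.mem_univ j))
  have htS : t = ∑ j ∈ S, c j * (q j)⁻¹ := by
    rw [htdef, ← Finset.sum_filter_of_ne (p := fun j => q j ≠ 0)]
    · rw [← hSdef]
      refine Finset.sum_congr rfl fun j hj => ?_
      rw [if_neg (by rw [hSdef, Finset.mem_filter] at hj; exact hj.2), div_eq_mul_inv]
    · intro j _ hj h
      exact hj (if_pos h)
  have ht0 : 0 < t := by
    obtain ⟨j, hj⟩ : ∃ j, c j ≠ 0 := by
      by_contra h
      push_neg at h
      rw [Finset.sum_eq_zero (fun j _ => h j)] at hc1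
      norm_num at hc1
    have hqj : q j ≠ 0 := fun h => hj (hcq j h)
    have hjS : j ∈ S := by rw [hSdef, Finset.mem_filter]; exact ⟨Finset.mem_univ j, hqj⟩
    have : 0 < c j * (q j)⁻¹ :=
      mul_pos (lt_of_le_of_ne (hc j) (Ne.symm hj)) (inv_pos.mpr (hq' j hjS))
    rw [htS]
    refine lt_of_lt_of_le this (Finset.single_le_sum (f := fun k => c k * (q k)⁻¹)
      (fun k _ => ?_) hjS)
    exact mul_nonneg (hc k) (inv_nonneg.mpr (hq k))
  have hle : t ≤ (lam * pp)⁻¹ := by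
    have h1 : lam * pp * t ≤ 1 := by nlinarith
    have h2 : 0 < lam * pp := mul_pos hlam hpp
    calc t = (lam * pp * t) * (lam * pp)⁻¹ := by field_simp
    _ ≤ 1 * (lam * pp)⁻¹ := mul_le_mul_of_nonneg_right h1 (inv_nonneg.mpr h2.le)
    _ = (lam * pp)⁻¹ := one_mul _
  have hjensen : ∑ j ∈ S, c j * Real.log ((q j)⁻¹) ≤ Real.log t := by
    have := (strictConcaveOn_log_Ioi.concaveOn).le_map_sum (t := S) (w := c)
      (p := fun j => (q j)⁻¹) (fun j _ => hc j) hcS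
      (fun j hj => Set.mem_Ioi.mpr (inv_pos.mpr (hq' j hj)))
    simpa [smul_eq_mul, ← htS] using this
  have hsum : ∑ j, c j * Real.log (q j) = ∑ j ∈ S, c j * Real.log (q j) := by
    symm
    apply Finset.sum_subset (Finset.subset_univ S)
    intro j _ hj
    rw [hSdef, Finset.mem_filter] at hj
    push_neg at hj
    rw [hcq j (hj (Finset.mem_univ j)), zero_mul]
  have hS2 : ∑ j ∈ S, c j * Real.log (q j) = - ∑ j ∈ S, c j * Real.log ((q j)⁻¹) := by
    rw [← Finset.sum_neg_distrib]
    refine Finset.sum_congr rfl fun j hj => ?_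
    rw [Real.log_inv]
    ring
  rw [hsum, hS2]
  have hlogt : Real.log t ≤ Real.log ((lam*pp)⁻¹) := Real.log_le_log ht0 hle
  rw [Real.log_inv, Real.log_mul (ne_of_gt hlam) (ne_of_gt hpp)] at hlogt
  linarith

lemma conj_dot (A M : Matrix (Fin m) (Fin m) ℂ) (b : Fin m → ℂ) :
    star (M *ᵥ b) ⬝ᵥ A *ᵥ (M *ᵥ b) = star b ⬝ᵥ ((star M * A * M) *ᵥ b) := by
  rw [Matrix.star_mulVec, Matrix.mulVec_mulVec, Matrix.dotProduct_mulVec,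
    Matrix.vecMul_vecMul, ← Matrix.dotProduct_mulVec, Matrix.star_eq_conjTranspose,
    Matrix.mul_assoc]

lemma dot_diag (d b : Fin m → ℂ) :
    star b ⬝ᵥ (Matrix.diagonal d *ᵥ b) = ∑ j, star (b j) * (d j * b j) := by
  simp [dotProduct, Matrix.mulVec_diagonal]

lemma cell1 (z : ℂ) (r : ℝ) (hr : r ≠ 0) :
    star (z / (r:ℂ)) * ((r:ℂ) * (z / (r:ℂ))) = ((Complex.normSq z / r : ℝ) : ℂ) := by
  have hrC : (r:ℂ) ≠ 0 := Complex.ofReal_ne_zero.mpr hr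
  have hz : star z * z = ((Complex.normSq z : ℝ) : ℂ) := by
    rw [Complex.star_def, mul_comm, Complex.mul_conj]
  push_cast
  rw [← hz]
  rw [star_div₀, show star (r:ℂ) = r from Complex.conj_ofReal r]
  field_simp

lemma cell2 (z : ℂ) (r : ℝ) (hr : r ≠ 0) :
    star z * (z / (r:ℂ)) = ((Complex.normSq z / r : ℝ) : ℂ) := by
  have hrC : (r:ℂ) ≠ 0 := Complex.ofReal_ne_zero.mpr hr
  have hz : star z * z = ((Complex.normSq z : ℝ) : ℂ) := by
    rw [Complex.star_def, mul_comm, Complex.mul_conj]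
  push_cast
  rw [← hz]
  field_simp

lemma cell3 (z : ℂ) (r : ℝ) : (star z * ((r:ℂ) * z)).re = r * Complex.normSq z := by
  have hz : star z * z = ((Complex.normSq z : ℝ) : ℂ) := by
    rw [Complex.star_def, mul_comm, Complex.mul_conj]
  rw [mul_comm (r:ℂ) z, ← mul_assoc, mul_comm (star z) z, mul_comm (z * star z),
    mul_comm z (star z), hz]
  simp [Complex.mul_re]

lemma cell4 (z : ℂ) (r : ℝ) : (z * (r:ℂ) * star z).re = r * Complex.normSq z := by
  rw [mul_comm z (r:ℂ), mul_assoc, mul_comm z (star z)]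
  have hz : star z * z = ((Complex.normSq z : ℝ) : ℂ) := by
    rw [Complex.star_def, mul_comm, Complex.mul_conj]
  rw [hz]
  simp [Complex.mul_re]

end Stmt6Aux

/-- if E : M → N is a positive unital map between finite-dimensional
C*-algebras (modelled as a matrix algebra M with a star-subalgebra N) satisfying the
Pimsner–Popa bound E(X) ≥ λX for positive X and some λ > 0, then for any state ρ with
S(ρ, ρ∘E) < ∞ one has S(ρ, ρ∘E) ≤ log(1/λ).  Here σ is the density matrix of the state
ρ∘E, i.e. Tr(σX) = Tr(ρ·E(X)) for all X, and finiteness of S(ρ, ρ∘E) is the support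
condition supp ρ ≤ supp σ. -/
theorem stmt6 {m : ℕ} (N : StarSubalgebra ℂ (Matrix (Fin m) (Fin m) ℂ))
    (E : Matrix (Fin m) (Fin m) ℂ →ₗ[ℂ] Matrix (Fin m) (Fin m) ℂ)
    (hrange : ∀ X, E X ∈ N)
    (hunital : E 1 = 1)
    (hpos : ∀ X : Matrix (Fin m) (Fin m) ℂ, X.PosSemidef → (E X).PosSemidef)
    (lam : ℝ) (hlam : 0 < lam)
    (hpp : ∀ X : Matrix (Fin m) (Fin m) ℂ, X.PosSemidef →
      (E X - (lam : ℂ) • X).PosSemidef)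
    (ρ σ : Matrix (Fin m) (Fin m) ℂ)
    (hρ : ρ.PosSemidef) (hρtr : ρ.trace = 1)
    (hσ : ∀ X, (σ * X).trace = (ρ * E X).trace)
    (hfin : suppLE ρ σ) :
    relEnt ρ σ ≤ Real.log (1 / lam) := by
  classical
  have hEstar : ∀ X, E Xᴴ = (E X)ᴴ := Stmt6Aux.map_star E hpos
  -- σ is Hermitian
  have hσH : σ.IsHermitian := by
    refine Stmt6Aux.eq_of_traces fun X => ?_
    have h1 : (σᴴ * X).trace = star ((σ * Xᴴ).trace) := by
      rw [← Matrix.trace_conjTranspose, Matrix.conjTranspose_mul,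
        Matrix.conjTranspose_conjTranspose, Matrix.trace_mul_comm]
    have h3 : star ((ρ * E Xᴴ).trace) = (σ * X).trace := by
      rw [hEstar X, ← Matrix.trace_conjTranspose, Matrix.conjTranspose_mul,
        Matrix.conjTranspose_conjTranspose, hρ.1, Matrix.trace_mul_comm, ← hσ]
    rw [h1, hσ Xᴴ, h3]
  -- σ is positive semidefinite
  have hσpsd : σ.PosSemidef := by
    refine Matrix.PosSemidef.of_dotProduct_mulVec_nonneg hσH fun x => ?_
    rw [Stmt6Aux.dot_eq_trace, hσ]
    exact Stmt6Aux.trace_mul_nonneg hρ (hpos _ (Stmt6Aux.posSemidef_outer x))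
  -- τ = σ - lam • ρ is positive semidefinite
  have hτ : (σ - (lam:ℂ) • ρ).PosSemidef := by
    refine Matrix.PosSemidef.of_dotProduct_mulVec_nonneg ?_ ?_
    · have hsm : ((lam:ℂ) • ρ).IsHermitian := by
        rw [Matrix.IsHermitian, Matrix.conjTranspose_smul, hρ.1,
          show star ((lam:ℝ):ℂ) = ((lam:ℝ):ℂ) by simp [Complex.star_def]]
      exact hσH.sub hsm
    · intro x
      rw [Stmt6Aux.dot_eq_trace, Matrix.sub_mul, Matrix.smul_mul, Matrix.trace_sub,
        Matrix.trace_smul, hσ]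
      have h4 : (ρ * E (Matrix.vecMulVec x (star x))).trace
          - (lam:ℂ) • (ρ * Matrix.vecMulVec x (star x)).trace
          = (ρ * (E (Matrix.vecMulVec x (star x))
              - (lam:ℂ) • Matrix.vecMulVec x (star x))).trace := by
        rw [Matrix.mul_sub, Matrix.mul_smul, Matrix.trace_sub, Matrix.trace_smul]
      rw [h4]
      exact Stmt6Aux.trace_mul_nonneg hρ (hpp _ (Stmt6Aux.posSemidef_outer x))
  -- spectral data for ρ
  obtain ⟨p, V, hV1, hV2, hρspec, hmlogρ, hppos⟩ :
      ∃ (p : Fin m → ℝ) (V : Matrix (Fin m) (Fin m) ℂ),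
      V * star V = 1 ∧ star V * V = 1 ∧
      ρ = V * Matrix.diagonal (fun i => ((p i : ℝ) : ℂ)) * star V ∧
      mlog ρ = V * Matrix.diagonal (fun i => ((Real.log (p i) : ℝ) : ℂ)) * star V ∧
      (∀ i, 0 ≤ p i) := by
    refine ⟨hρ.1.eigenvalues, (hρ.1.eigenvectorUnitary : Matrix (Fin m) (Fin m) ℂ),
      Matrix.mem_unitaryGroup_iff.mp (hρ.1.eigenvectorUnitary).2,
      Matrix.mem_unitaryGroup_iff'.mp (hρ.1.eigenvectorUnitary).2,
      (by have h := hρ.1.spectral_theorem; rwa [Unitary.conjStarAlgAut_apply] at h), ?_, fun i => hρ.eigenvalues_nonneg i⟩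
    have h1 : mlog ρ = hρ.1.cfc Real.log := by
      rw [mlog]
      exact dif_pos hρ.1
    rw [h1, Matrix.IsHermitian.cfc]
    rfl
  -- spectral data for σ
  obtain ⟨q, U, hU1, hU2, hσspec, hmlogσ, hqpos⟩ :
      ∃ (q : Fin m → ℝ) (U : Matrix (Fin m) (Fin m) ℂ),
      U * star U = 1 ∧ star U * U = 1 ∧
      σ = U * Matrix.diagonal (fun j => ((q j : ℝ) : ℂ)) * star U ∧
      mlog σ = U * Matrix.diagonal (fun j => ((Real.log (q j) : ℝ) : ℂ)) * star U ∧
      (∀ j, 0 ≤ q j) := by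
    refine ⟨hσH.eigenvalues, (hσH.eigenvectorUnitary : Matrix (Fin m) (Fin m) ℂ),
      Matrix.mem_unitaryGroup_iff.mp (hσH.eigenvectorUnitary).2,
      Matrix.mem_unitaryGroup_iff'.mp (hσH.eigenvectorUnitary).2,
      (by have h := hσH.spectral_theorem; rwa [Unitary.conjStarAlgAut_apply] at h), ?_, fun j => hσpsd.eigenvalues_nonneg j⟩
    have h1 : mlog σ = hσH.cfc Real.log := by
      rw [mlog]
      exact dif_pos hσH
    rw [h1, Matrix.IsHermitian.cfc]
    rfl
  have hptr : ∑ i, p i = 1 := by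
    have h2 : ρ.trace = ∑ i, ((p i : ℝ) : ℂ) := by
      rw [hρspec, Matrix.trace_mul_cycle, hV2, Matrix.one_mul, Matrix.trace_diagonal]
    rw [hρtr] at h2
    exact_mod_cast h2.symm
  -- B = star U * V
  obtain ⟨B, hB⟩ : ∃ B, B = star U * V := ⟨_, rfl⟩
  have hBB : star B * B = 1 := by
    rw [hB, StarMul.star_mul, star_star, Matrix.mul_assoc,
      ← Matrix.mul_assoc U (star U) V, hU1, Matrix.one_mul, hV2]
  have hDσ : star U * σ * U = Matrix.diagonal (fun j => ((q j : ℝ) : ℂ)) := by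
    rw [hσspec]
    simp only [Matrix.mul_assoc]
    rw [hU2, Matrix.mul_one, ← Matrix.mul_assoc, hU2, Matrix.one_mul]
  have hρU : star U * ρ * U = B * Matrix.diagonal (fun i => ((p i : ℝ) : ℂ)) * star B := by
    rw [hρspec, hB, StarMul.star_mul, star_star]
    simp only [Matrix.mul_assoc]
  -- Claim A: q j = 0 → B j i * p i = 0
  have hA0 : ∀ i j, q j = 0 → B j i * ((p i : ℝ) : ℂ) = 0 := by
    intro i j hqj
    have hcol : σ *ᵥ (fun k => U k j) = 0 := by
      funext k
      have h5 : σ * U = U * Matrix.diagonal (fun j => ((q j : ℝ) : ℂ)) := by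
        rw [hσspec]
        simp only [Matrix.mul_assoc]
        rw [hU2, Matrix.mul_one]
      have h6 : (σ *ᵥ fun k => U k j) k = (σ * U) k j := by
        simp [Matrix.mulVec, Matrix.mul_apply, dotProduct]
      rw [Pi.zero_apply, h6, h5, Matrix.mul_diagonal, hqj]
      simp
    have hrow := hfin _ hcol
    have h7 : ∀ k, (star U * ρ) j k = 0 := by
      intro k
      rw [Matrix.mul_apply]
      have hterm : ∀ l, (star U) j l * ρ l k = star (ρ k l * U l j) := by
        intro l
        rw [star_mul', Matrix.star_apply, mul_comm]
        congr 1
        conv_lhs => rw [← hρ.1]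
        rw [Matrix.conjTranspose_apply]
      rw [Finset.sum_congr rfl (fun l _ => hterm l), ← star_sum]
      have h8 : ∑ l, ρ k l * U l j = (ρ *ᵥ fun l => U l j) k := by
        simp [Matrix.mulVec, dotProduct]
      rw [h8, hrow]
      simp
    have h9 : star U * ρ * V = B * Matrix.diagonal (fun i => ((p i : ℝ) : ℂ)) := by
      rw [hρspec, hB]
      simp only [Matrix.mul_assoc]
      rw [hV2, Matrix.mul_one]
    have h10 : (star U * ρ * V) j i = 0 := by
      rw [Matrix.mul_apply]
      exact Finset.sum_eq_zero fun k _ => by rw [h7 k, zero_mul]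
    calc B j i * ((p i : ℝ) : ℂ)
        = (B * Matrix.diagonal (fun i => ((p i : ℝ) : ℂ))) j i := by rw [Matrix.mul_diagonal]
      _ = (star U * ρ * V) j i := by rw [h9]
      _ = 0 := h10
  -- column sums of |B|² are 1
  have hcsum : ∀ i, ∑ j, Complex.normSq (B j i) = 1 := by
    intro i
    have h := congrFun (congrFun hBB i) i
    rw [Matrix.mul_apply] at h
    have h1 : ∀ j, (star B) i j * B j i = ((Complex.normSq (B j i) : ℝ) : ℂ) := by
      intro j
      rw [Matrix.star_apply, Complex.star_def, mul_comm, Complex.mul_conj]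
    rw [Finset.sum_congr rfl (fun j _ => h1 j)] at h
    have h2 : ((1 : Matrix (Fin m) (Fin m) ℂ)) i i = 1 := Matrix.one_apply_eq i
    rw [h2] at h
    exact_mod_cast h
  -- the per-i Pimsner-Popa estimate
  have hmain : ∀ i, 0 < p i →
      Real.log lam + Real.log (p i) ≤ ∑ j, Complex.normSq (B j i) * Real.log (q j) := by
    intro i hpi
    set b : Fin m → ℂ := fun j => if q j = 0 then 0 else B j i / ((q j : ℝ) : ℂ) with hbdef
    set t : ℝ := ∑ j, if q j = 0 then 0 else Complex.normSq (B j i) / q j with htdef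
    have htcast : ((t : ℝ) : ℂ) = ∑ j, (((if q j = 0 then 0 else Complex.normSq (B j i) / q j : ℝ)) : ℂ) := by
      rw [htdef]
      push_cast
      rfl
    -- first: star b ⬝ᵥ Dq *ᵥ b = t
    have comp1 : star b ⬝ᵥ (Matrix.diagonal (fun j => ((q j : ℝ) : ℂ)) *ᵥ b) = ((t : ℝ) : ℂ) := by
      rw [Stmt6Aux.dot_diag, htcast]
      refine Finset.sum_congr rfl fun j _ => ?_
      rcases eq_or_ne (q j) 0 with h | h
      · simp [hbdef, h]
      · rw [hbdef]
        simp only [if_neg h]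
        exact Stmt6Aux.cell1 _ _ h
    -- d = star B *ᵥ b
    set d : Fin m → ℂ := star B *ᵥ b with hddef
    have comp3 : d i = ((t : ℝ) : ℂ) := by
      rw [hddef, htcast]
      simp only [Matrix.mulVec, dotProduct]
      refine Finset.sum_congr rfl fun j _ => ?_
      rw [Matrix.star_apply]
      rcases eq_or_ne (q j) 0 with h | h
      · simp [hbdef, h]
      · rw [hbdef]
        simp only [if_neg h]
        exact Stmt6Aux.cell2 _ _ h
    -- x = U *ᵥ b
    set x : Fin m → ℂ := U *ᵥ b with hxdef
    have compσ : star x ⬝ᵥ σ *ᵥ x = ((t : ℝ) : ℂ) := by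
      rw [hxdef, Stmt6Aux.conj_dot, hDσ, comp1]
    have compρ : star x ⬝ᵥ ρ *ᵥ x = star d ⬝ᵥ (Matrix.diagonal (fun i => ((p i : ℝ) : ℂ)) *ᵥ d) := by
      rw [hxdef, Stmt6Aux.conj_dot, hρU, hddef]
      have h := Stmt6Aux.conj_dot (Matrix.diagonal (fun i => ((p i : ℝ) : ℂ))) (star B) b
      rw [star_star] at h
      exact h.symm
    have hre : (star x ⬝ᵥ ρ *ᵥ x).re = ∑ k, p k * Complex.normSq (d k) := by
      rw [compρ, Stmt6Aux.dot_diag, Complex.re_sum]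
      exact Finset.sum_congr rfl fun k _ => Stmt6Aux.cell3 _ _
    have hsingle : p i * t ^ 2 ≤ ∑ k, p k * Complex.normSq (d k) := by
      have h1 : p i * Complex.normSq (d i) ≤ ∑ k, p k * Complex.normSq (d k) :=
        Finset.single_le_sum (f := fun k => p k * Complex.normSq (d k))
          (fun k _ => mul_nonneg (hppos k) (Complex.normSq_nonneg _)) (Finset.mem_univ i)
      rw [comp3] at h1
      rw [Complex.normSq_ofReal] at h1
      calc p i * t ^ 2 = p i * (t * t) := by ring
        _ ≤ ∑ k, p k * Complex.normSq (d k) := h1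
    -- PSD inequality
    have hτx := hτ.dotProduct_mulVec_nonneg x
    rw [Matrix.sub_mulVec, Matrix.smul_mulVec, dotProduct_sub,
      dotProduct_smul, compσ] at hτx
    have hτre : 0 ≤ t - lam * (star x ⬝ᵥ ρ *ᵥ x).re := by
      have := (Complex.le_def.mp hτx).1
      simpa [Complex.smul_re] using this
    have ht : lam * p i * t ^ 2 ≤ t := by
      have h2 : lam * (p i * t ^ 2) ≤ lam * ∑ k, p k * Complex.normSq (d k) :=
        mul_le_mul_of_nonneg_left hsingle hlam.le
      rw [← hre] at h2
      calc lam * p i * t ^ 2 = lam * (p i * t ^ 2) := by ring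
        _ ≤ lam * (star x ⬝ᵥ ρ *ᵥ x).re := h2
        _ ≤ t := by linarith
    rw [htdef] at ht
    exact Stmt6Aux.jensen_aux hlam hpi hqpos (fun j => Complex.normSq_nonneg _) (hcsum i)
      (fun j hqj => by
        have := hA0 i j hqj
        have hBji : B j i = 0 := by
          rcases mul_eq_zero.mp this with h | h
          · exact h
          · exact absurd (Complex.ofReal_eq_zero.mp h) (ne_of_gt hpi)
        rw [hBji, Complex.normSq_zero]) ht
  -- trace computations
  have hVconj : ∀ M : Matrix (Fin m) (Fin m) ℂ, (V * M * star V).trace = M.trace := by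
    intro M
    rw [Matrix.trace_mul_cycle, hV2, Matrix.one_mul]
  have key1 : ((ρ * mlog ρ).trace).re = ∑ i, p i * Real.log (p i) := by
    have h3 : ρ * mlog ρ = V * (Matrix.diagonal (fun i => ((p i : ℝ) : ℂ))
        * Matrix.diagonal (fun i => ((Real.log (p i) : ℝ) : ℂ))) * star V := by
      rw [hmlogρ, hρspec]
      simp only [Matrix.mul_assoc]
      rw [← Matrix.mul_assoc (star V) V, hV2, Matrix.one_mul]
    rw [h3, hVconj, Matrix.diagonal_mul_diagonal, Matrix.trace_diagonal, Complex.re_sum]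
    refine Finset.sum_congr rfl fun i _ => ?_
    rw [← Complex.ofReal_mul, Complex.ofReal_re]
  have key2 : ((ρ * mlog σ).trace).re
      = ∑ j, ((star U * ρ * U) j j).re * Real.log (q j) := by
    have h3 : (ρ * mlog σ).trace
        = ((star U * ρ * U) * Matrix.diagonal (fun j => ((Real.log (q j) : ℝ) : ℂ))).trace := by
      rw [hmlogσ]
      calc (ρ * (U * Matrix.diagonal (fun j => ((Real.log (q j) : ℝ) : ℂ)) * star U)).trace
          = ((ρ * (U * Matrix.diagonal (fun j => ((Real.log (q j) : ℝ) : ℂ)))) * star U).trace := by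
            rw [← Matrix.mul_assoc]
        _ = (star U * (ρ * (U * Matrix.diagonal (fun j => ((Real.log (q j) : ℝ) : ℂ))))).trace :=
            Matrix.trace_mul_comm _ _
        _ = ((star U * ρ * U) * Matrix.diagonal (fun j => ((Real.log (q j) : ℝ) : ℂ))).trace := by
            simp only [Matrix.mul_assoc]
    rw [h3]
    have h4 : ((star U * ρ * U) * Matrix.diagonal (fun j => ((Real.log (q j) : ℝ) : ℂ))).trace
        = ∑ j, (star U * ρ * U) j j * ((Real.log (q j) : ℝ) : ℂ) := by
      rw [Matrix.trace]
      refine Finset.sum_congr rfl fun j _ => ?_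
      rw [Matrix.diag]
      exact Matrix.mul_diagonal _ _ _ _
    rw [h4, Complex.re_sum]
    refine Finset.sum_congr rfl fun j _ => ?_
    rw [Complex.mul_re]
    simp
  have keyrr : ∀ j, ((star U * ρ * U) j j).re = ∑ i, p i * Complex.normSq (B j i) := by
    intro j
    rw [hρU, Matrix.mul_apply, Complex.re_sum]
    refine Finset.sum_congr rfl fun i _ => ?_
    rw [Matrix.mul_diagonal, Matrix.star_apply]
    exact Stmt6Aux.cell4 _ _
  -- final assembly
  have hlow : Real.log lam + ∑ i, p i * Real.log (p i)
      ≤ ∑ j, ((star U * ρ * U) j j).re * Real.log (q j) := by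
    have h5 : ∑ j, ((star U * ρ * U) j j).re * Real.log (q j)
        = ∑ i, p i * ∑ j, Complex.normSq (B j i) * Real.log (q j) := by
      rw [Finset.sum_congr rfl (fun j _ => by rw [keyrr j, Finset.sum_mul])]
      rw [Finset.sum_comm]
      refine Finset.sum_congr rfl fun i _ => ?_
      rw [Finset.mul_sum]
      refine Finset.sum_congr rfl fun j _ => ?_
      ring
    rw [h5]
    have h6 : ∀ i, p i * (Real.log lam + Real.log (p i))
        ≤ p i * ∑ j, Complex.normSq (B j i) * Real.log (q j) := by
      intro i
      rcases eq_or_lt_of_le (hppos i) with h0 | hpi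
      · rw [← h0]
        simp
      · exact mul_le_mul_of_nonneg_left (hmain i hpi) hpi.le
    have h7 : ∑ i, p i * (Real.log lam + Real.log (p i))
        = Real.log lam + ∑ i, p i * Real.log (p i) := by
      simp only [mul_add]
      rw [Finset.sum_add_distrib, ← Finset.sum_mul, hptr, one_mul]
    calc Real.log lam + ∑ i, p i * Real.log (p i)
        = ∑ i, p i * (Real.log lam + Real.log (p i)) := h7.symm
      _ ≤ ∑ i, p i * ∑ j, Complex.normSq (B j i) * Real.log (q j) :=
          Finset.sum_le_sum fun i _ => h6 i
  have hfinal : relEnt ρ σ = ((ρ * mlog ρ).trace).re - ((ρ * mlog σ).trace).re := by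
    rw [relEnt, Matrix.mul_sub, Matrix.trace_sub, Complex.sub_re]
  rw [hfinal, key1, key2, one_div, Real.log_inv]
  linarith
end

section
/- Monotonicity in the second argument: for density matrices ρ and positive operators σ₁ ≤ σ₂ on a finite-dimensional Hilbert space with supp(ρ) ≤ supp(σ₁), we have S(ρ, σ₂) ≤ S(ρ, σ₁). -/
open Matrix
open scoped ComplexOrder

/-! ### Auxiliary scalar integral lemmas -/

section ScalarIntegral

open MeasureTheory Set Filter Topology

/-- The integrand in the integral representation of the logarithm. -/
noncomputable def gfun (l : ℝ) (t : ℝ) : ℝ := (1 + t)⁻¹ - (l + t)⁻¹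

lemma gfun_hasDeriv {l : ℝ} (hl : 0 < l) {t : ℝ} (ht : t ∈ Ici (0:ℝ)) :
    HasDerivAt (fun t => Real.log (1 + t) - Real.log (l + t)) (gfun l t) t := by
  have h1 : (0:ℝ) < 1 + t := by linarith [ht.out]
  have h2 : (0:ℝ) < l + t := by linarith [ht.out]
  have d1 : HasDerivAt (fun t : ℝ => Real.log (1 + t)) (1 + t)⁻¹ t := by
    have := (Real.hasDerivAt_log h1.ne').comp t ((hasDerivAt_id t).const_add 1)
    simpa [Function.comp_def] using this
  have d2 : HasDerivAt (fun t : ℝ => Real.log (l + t)) (l + t)⁻¹ t := by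
    have := (Real.hasDerivAt_log h2.ne').comp t ((hasDerivAt_id t).const_add l)
    simpa [Function.comp_def] using this
  simpa [gfun, Pi.sub_def] using d1.sub d2

lemma gfun_tendsto {l : ℝ} (hl : 0 < l) :
    Tendsto (fun t => Real.log (1 + t) - Real.log (l + t)) atTop (𝓝 0) := by
  have h : ∀ᶠ t in atTop, Real.log (1 + t) - Real.log (l + t)
      = Real.log ((1 + t) / (l + t)) := by
    filter_upwards [eventually_gt_atTop 0] with t ht
    rw [Real.log_div (by linarith) (by linarith)]
  rw [tendsto_congr' h]
  have h2 : ∀ᶠ t in atTop, (1 + t) / (l + t) = 1 + (1 - l) * (l + t)⁻¹ := by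
    filter_upwards [eventually_gt_atTop 0] with t ht
    field_simp
    ring
  have h3 : Tendsto (fun t : ℝ => (1 + t) / (l + t)) atTop (𝓝 1) := by
    rw [tendsto_congr' h2]
    have : Tendsto (fun t : ℝ => (l + t)⁻¹) atTop (𝓝 0) :=
      (tendsto_atTop_add_const_left _ l tendsto_id).inv_tendsto_atTop
    simpa using (this.const_mul (1 - l)).const_add 1
  have := (Real.continuousAt_log (by norm_num : (1:ℝ) ≠ 0)).tendsto.comp h3
  simpa [Function.comp_def] using this

lemma gfun_integrableOn {l : ℝ} (hl : 0 < l) : IntegrableOn (gfun l) (Ioi 0) := by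
  rcases le_or_gt 1 l with h | h
  · exact integrableOn_Ioi_deriv_of_nonneg' (fun t ht => gfun_hasDeriv hl ht)
      (fun t ht => by
        have h2 : (0:ℝ) < 1 + t := by linarith [ht.out]
        have : (l + t)⁻¹ ≤ (1 + t)⁻¹ := by
          apply inv_anti₀ h2; linarith
        simpa [gfun] using this) (gfun_tendsto hl)
  · exact integrableOn_Ioi_deriv_of_nonpos' (fun t ht => gfun_hasDeriv hl ht)
      (fun t ht => by
        have h2 : (0:ℝ) < l + t := by linarith [ht.out]
        have : (1 + t)⁻¹ ≤ (l + t)⁻¹ := by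
          apply inv_anti₀ h2; linarith
        simpa [gfun] using this) (gfun_tendsto hl)

lemma gfun_integral {l : ℝ} (hl : 0 < l) : ∫ t in Ioi (0:ℝ), gfun l t = Real.log l := by
  rcases le_or_gt 1 l with h | h
  · rw [integral_Ioi_of_hasDerivAt_of_nonneg' (fun t ht => gfun_hasDeriv hl ht)
      (fun t ht => by
        have h2 : (0:ℝ) < 1 + t := by linarith [ht.out.le]
        have : (l + t)⁻¹ ≤ (1 + t)⁻¹ := by
          apply inv_anti₀ h2; linarith [ht.out.le]
        simpa [gfun] using this) (gfun_tendsto hl)]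
    simp
  · rw [integral_Ioi_of_hasDerivAt_of_nonpos' (fun t ht => gfun_hasDeriv hl ht)
      (fun t ht => by
        have h2 : (0:ℝ) < l + t := by linarith [ht.out.le]
        have : (1 + t)⁻¹ ≤ (l + t)⁻¹ := by
          apply inv_anti₀ h2; linarith [ht.out.le]
        simpa [gfun] using this) (gfun_tendsto hl)]
    simp

lemma gfun_term_integrableOn {w l : ℝ} (hwl : w ≠ 0 → 0 < l) :
    IntegrableOn (fun t => w * gfun l t) (Ioi 0) := by
  by_cases hw : w = 0
  · simp only [hw, zero_mul]
    exact integrableOn_zero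
  · exact (gfun_integrableOn (hwl hw)).const_mul w

lemma gfun_term_integral {w l : ℝ} (hwl : w ≠ 0 → 0 < l) :
    ∫ t in Ioi (0:ℝ), w * gfun l t = w * Real.log l := by
  by_cases hw : w = 0
  · simp [hw]
  · rw [MeasureTheory.integral_const_mul, gfun_integral (hwl hw)]

end ScalarIntegral

/-! ### Auxiliary matrix lemmas -/

section MatrixLemmas

variable {n : ℕ}

lemma psd_diag_nonneg {M : Matrix (Fin n) (Fin n) ℂ} (hM : M.PosSemidef) (i : Fin n) :
    0 ≤ M i i := by
  have := hM.dotProduct_mulVec_nonneg (Pi.single i 1)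
  simpa [dotProduct, Pi.single_apply, Finset.sum_ite_eq, mulVec] using this

lemma psd_trace_re_nonneg {M : Matrix (Fin n) (Fin n) ℂ} (hM : M.PosSemidef) :
    0 ≤ M.trace.re := by
  rw [Matrix.trace, Complex.re_sum]
  exact Finset.sum_nonneg fun i _ => (Complex.nonneg_iff.mp (psd_diag_nonneg hM i)).1

open scoped MatrixOrder in
lemma trace_mul_psd_nonneg {A B : Matrix (Fin n) (Fin n) ℂ}
    (hA : A.PosSemidef) (hB : B.PosSemidef) : 0 ≤ (A * B).trace.re := by
  have h2 : (A * B).trace = (CFC.sqrt A * B * CFC.sqrt A).trace := by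
    rw [(by rw [← mul_assoc, CFC.sqrt_mul_sqrt_self A hA.nonneg] : A * B = CFC.sqrt A * (CFC.sqrt A * B)),
      ← Matrix.trace_mul_comm, mul_assoc]
  have h3 : (CFC.sqrt A * B * CFC.sqrt A).PosSemidef := by
    have := hB.mul_mul_conjTranspose_same (CFC.sqrt A)
    rwa [(CFC.sqrt_nonneg A).posSemidef.isHermitian.eq] at this
  rw [h2]; exact psd_trace_re_nonneg h3

lemma star_mulVec_dotProduct {M : Matrix (Fin n) (Fin n) ℂ} (v w : Fin n → ℂ) :
    star (M *ᵥ v) ⬝ᵥ w = star v ⬝ᵥ (Mᴴ *ᵥ w) := by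
  rw [star_mulVec, ← dotProduct_mulVec]

/-- Inverse is antitone on positive definite matrices. -/
lemma inv_antitone {X Y : Matrix (Fin n) (Fin n) ℂ} (hX : X.PosDef) (hY : Y.PosDef)
    (hXY : (Y - X).PosSemidef) : (X⁻¹ - Y⁻¹).PosSemidef := by
  have hXi := hX.inv
  have hYi := hY.inv
  have hXdet : IsUnit X.det := isUnit_iff_ne_zero.mpr (ne_of_gt hX.det_pos)
  have hYdet : IsUnit Y.det := isUnit_iff_ne_zero.mpr (ne_of_gt hY.det_pos)
  refine PosSemidef.of_dotProduct_mulVec_nonneg (hXi.1.sub hYi.1) fun v => ?_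
  set u : Fin n → ℂ := Y⁻¹ *ᵥ v with hu
  have key : 0 ≤ star (u - X⁻¹ *ᵥ v) ⬝ᵥ (X *ᵥ (u - X⁻¹ *ᵥ v)) := hX.posSemidef.dotProduct_mulVec_nonneg _
  have hXinv : X *ᵥ (X⁻¹ *ᵥ v) = v := by
    rw [mulVec_mulVec, Matrix.mul_nonsing_inv _ hXdet, one_mulVec]
  have hYinv : Y *ᵥ u = v := by
    rw [hu, mulVec_mulVec, Matrix.mul_nonsing_inv _ hYdet, one_mulVec]
  have herm1 : star (X⁻¹ *ᵥ v) ⬝ᵥ (X *ᵥ u) = star v ⬝ᵥ u := by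
    rw [star_mulVec_dotProduct, hXi.1.eq, mulVec_mulVec,
      Matrix.nonsing_inv_mul _ hXdet, one_mulVec]
  have herm2 : star (X⁻¹ *ᵥ v) ⬝ᵥ v = star v ⬝ᵥ (X⁻¹ *ᵥ v) := by
    rw [star_mulVec_dotProduct, hXi.1.eq]
  have herm3 : star u ⬝ᵥ v = star v ⬝ᵥ (Y⁻¹ *ᵥ v) := by
    rw [hu, star_mulVec_dotProduct, hYi.1.eq]
  have expand : star (u - X⁻¹ *ᵥ v) ⬝ᵥ (X *ᵥ (u - X⁻¹ *ᵥ v))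
      = star u ⬝ᵥ (X *ᵥ u) - star u ⬝ᵥ v - star (X⁻¹ *ᵥ v) ⬝ᵥ (X *ᵥ u)
        + star (X⁻¹ *ᵥ v) ⬝ᵥ v := by
    rw [mulVec_sub, hXinv, star_sub]
    simp only [sub_dotProduct, dotProduct_sub]
    ring
  have hmono : star u ⬝ᵥ (X *ᵥ u) ≤ star u ⬝ᵥ (Y *ᵥ u) := by
    have h0 := hXY.dotProduct_mulVec_nonneg u
    rw [sub_mulVec, dotProduct_sub] at h0
    exact sub_nonneg.mp h0
  have hYu : star u ⬝ᵥ (Y *ᵥ u) = star v ⬝ᵥ (Y⁻¹ *ᵥ v) := by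
    rw [hYinv, herm3]
  rw [sub_mulVec, dotProduct_sub]
  rw [expand, herm1, herm2, herm3] at key
  calc (0:ℂ) ≤ star u ⬝ᵥ (X *ᵥ u) - star v ⬝ᵥ (Y⁻¹ *ᵥ v) - star v ⬝ᵥ u
        + star v ⬝ᵥ (X⁻¹ *ᵥ v) := key
    _ ≤ star u ⬝ᵥ (Y *ᵥ u) - star v ⬝ᵥ (Y⁻¹ *ᵥ v) - star v ⬝ᵥ u
        + star v ⬝ᵥ (X⁻¹ *ᵥ v) := by
          exact add_le_add (sub_le_sub_right (sub_le_sub_right hmono _) _) le_rfl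
    _ = star v ⬝ᵥ (X⁻¹ *ᵥ v) - star v ⬝ᵥ Y⁻¹ *ᵥ v := by
          rw [hYu, hu]
          ring

lemma ofReal_mul_pos {t : ℝ} (ht : 0 < t) {x : ℂ} (hx : 0 < x) : 0 < (t:ℂ) * x := by
  rw [Complex.lt_def] at hx ⊢
  obtain ⟨h1, h2⟩ := hx
  simp only [Complex.zero_re, Complex.zero_im] at h1 h2
  constructor
  · simpa [Complex.re_ofReal_mul] using mul_pos ht h1
  · simp [Complex.im_ofReal_mul, ← h2]

lemma shift_posdef {σ : Matrix (Fin n) (Fin n) ℂ} (hσ : σ.PosSemidef) {t : ℝ} (ht : 0 < t) :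
    (σ + (t:ℂ) • 1).PosDef := by
  have hherm : ((t:ℂ) • (1 : Matrix (Fin n) (Fin n) ℂ)).IsHermitian := by
    simp [Matrix.IsHermitian, conjTranspose_smul, Complex.star_def, Complex.conj_ofReal]
  refine PosDef.of_dotProduct_mulVec_pos (hσ.1.add hherm) fun v hv => ?_
  rw [add_mulVec, dotProduct_add]
  have h1 : 0 ≤ star v ⬝ᵥ σ *ᵥ v := hσ.dotProduct_mulVec_nonneg v
  have h2 : 0 < star v ⬝ᵥ (((t:ℂ) • (1 : Matrix (Fin n) (Fin n) ℂ)) *ᵥ v) := by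
    rw [smul_mulVec, one_mulVec, dotProduct_smul, smul_eq_mul]
    have hvv : 0 < star v ⬝ᵥ v := by
      rcases lt_or_eq_of_le (dotProduct_star_self_nonneg v) with h | h
      · exact h
      · exact absurd (dotProduct_star_self_eq_zero.mp h.symm) hv
    exact ofReal_mul_pos ht hvv
  calc (0:ℂ) = 0 + 0 := by ring
    _ < star v ⬝ᵥ σ *ᵥ v + star v ⬝ᵥ (((t:ℂ) • (1 : Matrix (Fin n) (Fin n) ℂ)) *ᵥ v) :=
        add_lt_add_of_le_of_lt h1 h2

end MatrixLemmas

/-! ### Spectral expansion lemmas -/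

section Spectral

variable {n : ℕ} {ρ σ : Matrix (Fin n) (Fin n) ℂ} (hσ : σ.IsHermitian)

local notation "U" => (Matrix.IsHermitian.eigenvectorUnitary hσ : Matrix (Fin n) (Fin n) ℂ)

lemma re_trace_conj_diag (ρ : Matrix (Fin n) (Fin n) ℂ) (d : Fin n → ℝ) :
    (ρ * (U * diagonal (fun j => (d j : ℂ)) * star U)).trace.re
      = ∑ j, ((star U * ρ * U) j j).re * d j := by
  have h1 : ρ * (U * diagonal (fun j => (d j : ℂ)) * star U)
      = (ρ * U * diagonal (fun j => (d j : ℂ))) * star U := by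
    noncomm_ring
  rw [h1, Matrix.trace_mul_comm, ← mul_assoc, ← mul_assoc]
  have h2 : ((star U * ρ * U) * diagonal (fun j => (d j : ℂ))).trace
      = ∑ j, (star U * ρ * U) j j * (d j : ℂ) := by
    simp [Matrix.trace, Matrix.diag, Matrix.mul_diagonal]
  rw [h2, Complex.re_sum]
  congr 1; ext j
  simp [Complex.mul_re]

lemma conj_entry_eq (ρ : Matrix (Fin n) (Fin n) ℂ) (j : Fin n) :
    (star U * ρ * U) j j = star (fun i => U i j) ⬝ᵥ (ρ *ᵥ fun i => U i j) := by
  simp only [Matrix.mul_apply, Matrix.mulVec, dotProduct, Matrix.star_apply,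
    Pi.star_apply, star_eq_conjTranspose, conjTranspose_apply, Finset.sum_mul,
    Finset.mul_sum]
  rw [Finset.sum_comm]
  congr 1; ext a
  congr 1; ext b
  ring

end Spectral

/-- The main spectral package: for a PSD matrix `σ` with `supp ρ ≤ supp σ`, there are
weights `w` and eigenvalues `l` computing the relevant traces. -/
lemma spectral_package {n : ℕ} {ρ σ : Matrix (Fin n) (Fin n) ℂ}
    (hρ : ρ.PosSemidef) (hσ : σ.PosSemidef) (hsupp : suppLE ρ σ) :
    ∃ w l : Fin n → ℝ,
      (∀ j, 0 ≤ w j) ∧ (∀ j, w j ≠ 0 → 0 < l j) ∧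
      (∑ j, w j) = ρ.trace.re ∧
      (ρ * mlog σ).trace.re = ∑ j, w j * Real.log (l j) ∧
      (∀ t : ℝ, 0 < t →
        (ρ * (σ + (t:ℂ) • 1)⁻¹).trace.re = ∑ j, w j * (l j + t)⁻¹) := by
  classical
  set U : Matrix (Fin n) (Fin n) ℂ := (Matrix.IsHermitian.eigenvectorUnitary hσ.1 :
    Matrix (Fin n) (Fin n) ℂ) with hUdef
  have hUU : U * star U = 1 :=
    (Matrix.mem_unitaryGroup_iff).mp (Matrix.IsHermitian.eigenvectorUnitary hσ.1).2
  have hUU' : star U * U = 1 :=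
    (Matrix.mem_unitaryGroup_iff').mp (Matrix.IsHermitian.eigenvectorUnitary hσ.1).2
  set l : Fin n → ℝ := hσ.1.eigenvalues with hl
  set w : Fin n → ℝ := fun j => ((star U * ρ * U) j j).re with hw
  have hconjpsd : (star U * ρ * U).PosSemidef := by
    have := hρ.conjTranspose_mul_mul_same U
    rwa [Matrix.star_eq_conjTranspose]
  refine ⟨w, l, ?_, ?_, ?_, ?_, ?_⟩
  · intro j
    exact (Complex.nonneg_iff.mp (psd_diag_nonneg hconjpsd j)).1
  · intro j hwj
    rcases lt_or_eq_of_le (hσ.eigenvalues_nonneg j) with h | h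
    · exact h
    · exfalso
      apply hwj
      have hcol : σ *ᵥ (fun i => U i j) = 0 := by
        have hc : (fun i => U i j) = ⇑(hσ.1.eigenvectorBasis j) := by
          ext i; exact Matrix.IsHermitian.eigenvectorUnitary_apply hσ.1 i j
        rw [hc, hσ.1.mulVec_eigenvectorBasis, ← h]
        simp
      have hρcol : ρ *ᵥ (fun i => U i j) = 0 := hsupp _ hcol
      rw [hw]
      beta_reduce
      rw [show (star U * ρ * U) j j = star (fun i => U i j) ⬝ᵥ (ρ *ᵥ fun i => U i j) from
        conj_entry_eq hσ.1 ρ j]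
      rw [hρcol]
      simp
  · have : (star U * ρ * U).trace = ρ.trace := by
      rw [Matrix.trace_mul_cycle, hUU, one_mul]
    calc ∑ j, w j = (star U * ρ * U).trace.re := by
          rw [Matrix.trace, Complex.re_sum]; rfl
      _ = ρ.trace.re := by rw [this]
  · have hm : mlog σ = U * diagonal (fun j => ((Real.log (l j) : ℝ) : ℂ)) * star U := by
      rw [mlog, dif_pos hσ.1, Matrix.IsHermitian.cfc]
      rfl
    rw [hm, re_trace_conj_diag hσ.1 ρ]
  · intro t ht
    have hpos : ∀ j, (0:ℝ) < l j + t := fun j =>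
      add_pos_of_nonneg_of_pos (hσ.eigenvalues_nonneg j) ht
    have hshift : σ + (t:ℂ) • 1 = U * diagonal (fun j => ((l j + t : ℝ) : ℂ)) * star U := by
      have h1 : σ = U * diagonal (RCLike.ofReal ∘ hσ.1.eigenvalues) * star U :=
        hσ.1.spectral_theorem
      have h2 : (t:ℂ) • (1 : Matrix (Fin n) (Fin n) ℂ)
          = U * ((t:ℂ) • 1) * star U := by
        rw [mul_smul_comm, smul_mul_assoc, mul_one, hUU]
      rw [h1, h2, ← Matrix.add_mul, ← Matrix.mul_add]
      congr 1
      congr 1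
      rw [← Matrix.diagonal_one, ← Matrix.diagonal_smul, Matrix.diagonal_add]
      congr 1
      ext j
      simp [hl]
    have hinv : (σ + (t:ℂ) • 1)⁻¹
        = U * diagonal (fun j => (((l j + t : ℝ) : ℂ))⁻¹) * star U := by
      apply Matrix.inv_eq_right_inv
      rw [hshift]
      calc (U * diagonal (fun j => ((l j + t : ℝ) : ℂ)) * star U)
            * (U * diagonal (fun j => (((l j + t : ℝ) : ℂ))⁻¹) * star U)
          = U * (diagonal (fun j => ((l j + t : ℝ) : ℂ)) * (star U * U)
              * diagonal (fun j => (((l j + t : ℝ) : ℂ))⁻¹)) * star U := by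
            noncomm_ring
        _ = 1 := by
            rw [hUU', mul_one, Matrix.diagonal_mul_diagonal]
            have : (fun j => ((l j + t : ℝ) : ℂ) * (((l j + t : ℝ) : ℂ))⁻¹)
                = fun _ => (1:ℂ) := by
              ext j
              exact mul_inv_cancel₀ (Complex.ofReal_ne_zero.mpr (hpos j).ne')
            rw [this, Matrix.diagonal_one, mul_one, hUU]
    have : (fun j => (((l j + t : ℝ) : ℂ))⁻¹) = fun j => (((l j + t)⁻¹ : ℝ) : ℂ) := by
      ext j; simp
    rw [hinv, this, re_trace_conj_diag hσ.1 ρ]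

/-- monotonicity in the second argument: for a density matrix ρ and positive
operators σ₁ ≤ σ₂ with supp ρ ≤ supp σ₁, one has S(ρ, σ₂) ≤ S(ρ, σ₁). -/
theorem stmt9 {n : ℕ} (ρ σ₁ σ₂ : Matrix (Fin n) (Fin n) ℂ)
    (hρ : ρ.PosSemidef) (htr : ρ.trace = 1)
    (hσ₁ : σ₁.PosSemidef) (hσ₂ : σ₂.PosSemidef)
    (hle : (σ₂ - σ₁).PosSemidef)
    (hsupp : suppLE ρ σ₁) :
    relEnt ρ σ₂ ≤ relEnt ρ σ₁ := by
  classical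
  have hsupp₂ : suppLE ρ σ₂ := by
    intro v hv
    apply hsupp
    have h1 : 0 ≤ star v ⬝ᵥ ((σ₂ - σ₁) *ᵥ v) := hle.dotProduct_mulVec_nonneg v
    rw [sub_mulVec, dotProduct_sub, hv, dotProduct_zero] at h1
    have h2 : 0 ≤ star v ⬝ᵥ (σ₁ *ᵥ v) := hσ₁.dotProduct_mulVec_nonneg v
    have h3 : star v ⬝ᵥ (σ₁ *ᵥ v) = 0 := le_antisymm (by simpa using neg_nonneg.mp (by simpa using h1)) h2
    exact (hσ₁.dotProduct_mulVec_zero_iff v).mp h3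
  obtain ⟨w₁, l₁, hw₁, hwl₁, hsum₁, hT₁, hR₁⟩ := spectral_package hρ hσ₁ hsupp
  obtain ⟨w₂, l₂, hw₂, hwl₂, hsum₂, hT₂, hR₂⟩ := spectral_package hρ hσ₂ hsupp₂
  suffices h : (ρ * mlog σ₁).trace.re ≤ (ρ * mlog σ₂).trace.re by
    unfold relEnt
    rw [mul_sub, mul_sub, Matrix.trace_sub, Matrix.trace_sub, Complex.sub_re, Complex.sub_re]
    linarith
  rw [hT₁, hT₂]
  open MeasureTheory Set in
  have hint : ∀ (w l : Fin n → ℝ), (∀ j, w j ≠ 0 → 0 < l j) →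
      (IntegrableOn (fun t => ∑ j, w j * gfun (l j) t) (Ioi (0:ℝ)) ∧
        ∑ j, w j * Real.log (l j) = ∫ t in Ioi (0:ℝ), ∑ j, w j * gfun (l j) t) := by
    intro w l hwl
    constructor
    · exact integrable_finset_sum _ (fun j _ => gfun_term_integrableOn (hwl j))
    · rw [integral_finset_sum _ (fun j _ => gfun_term_integrableOn (hwl j))]
      exact Finset.sum_congr rfl fun j _ => (gfun_term_integral (hwl j)).symm
  obtain ⟨hI₁, hE₁⟩ := hint w₁ l₁ hwl₁
  obtain ⟨hI₂, hE₂⟩ := hint w₂ l₂ hwl₂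
  rw [hE₁, hE₂]
  open MeasureTheory Set in
  apply setIntegral_mono_on hI₁ hI₂ measurableSet_Ioi
  intro t ht
  have ht' : (0:ℝ) < t := ht
  -- rewrite both sides via resolvents
  have hsplit : ∀ (w l : Fin n → ℝ),
      (∑ j, w j * gfun (l j) t) = (∑ j, w j) * (1 + t)⁻¹ - ∑ j, w j * (l j + t)⁻¹ := by
    intro w l
    rw [Finset.sum_mul, ← Finset.sum_sub_distrib]
    exact Finset.sum_congr rfl fun j _ => by rw [gfun]; ring
  rw [hsplit w₁ l₁, hsplit w₂ l₂, hsum₁, hsum₂, ← hR₁ t ht', ← hR₂ t ht']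
  have hkey : 0 ≤ (ρ * ((σ₁ + (t:ℂ) • 1)⁻¹ - (σ₂ + (t:ℂ) • 1)⁻¹)).trace.re := by
    apply trace_mul_psd_nonneg hρ
    apply inv_antitone (shift_posdef hσ₁ ht') (shift_posdef hσ₂ ht')
    have : σ₂ + (t:ℂ) • 1 - (σ₁ + (t:ℂ) • 1) = σ₂ - σ₁ := by abel
    rw [this]; exact hle
  rw [mul_sub, Matrix.trace_sub, Complex.sub_re] at hkey
  linarith
end

section
/- In the algebra M = ⊕⁴ᵢ₌₁Mₙ(ℂ) with subalgebra N = {diag(A,A,A,A)} and conditional expectation E(A₁⊕A₂⊕A₃⊕A₄) = B⊕⁴ with B = (ΣAᵢ)/4: take φ to be the state with density matrix (1/4)(ρ₀⊕ρ₀⊕ρ₀⊕ρ₀) for any faithful density matrix ρ₀ on ℂⁿ, and φᵢ (i=1..4) the states with density matrices ρ₀ supported entirely in the i-th block. Then φ = (1/4)Σᵢφᵢ, φ∘E = φ, all restrictions φᵢ|N coincide, and the entropic disturbance χ({1/4},{φᵢ}) − χ({1/4},{φᵢ|N}) equals 2 log 2. -/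
open Matrix
open scoped ComplexOrder

/-- The averaging conditional expectation E(A₁⊕A₂⊕A₃⊕A₄) = B⊕B⊕B⊕B, B = (ΣAᵢ)/4, on
M = ⊕⁴Mₙ(ℂ), modelled as the Pi-algebra Fin 4 → Mₙ(ℂ). -/
noncomputable def Eavg {n : ℕ} (X : Fin 4 → Matrix (Fin n) (Fin n) ℂ) :
    Fin 4 → Matrix (Fin n) (Fin n) ℂ :=
  fun _ => (4 : ℂ)⁻¹ • ∑ i, X i

/-- Umegaki relative entropy on the block-diagonal algebra ⊕⁴Mₙ(ℂ): the sum of the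
blockwise contributions Tr(ρᵢ(log ρᵢ − log σᵢ)). -/
noncomputable def piRelEnt {n : ℕ} (ρ σ : Fin 4 → Matrix (Fin n) (Fin n) ℂ) : ℝ :=
  ∑ i, relEnt (ρ i) (σ i)

/-- The density matrix (w.r.t. the trace of Mₙ(ℂ)) of the restriction to the diagonal
subalgebra N = {A⊕A⊕A⊕A} ≅ Mₙ(ℂ) of the state with block densities ρᵢ:
Σᵢ Tr(ρᵢA) = Tr((Σᵢρᵢ)A). -/
noncomputable def resD {n : ℕ} (ρ : Fin 4 → Matrix (Fin n) (Fin n) ℂ) :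
    Matrix (Fin n) (Fin n) ℂ :=
  ∑ i, ρ i

lemma mlog_smul_inv4 {n : ℕ} (ρ₀ : Matrix (Fin n) (Fin n) ℂ) (h : ρ₀.PosDef) :
    mlog ((4:ℂ)⁻¹ • ρ₀) = mlog ρ₀ - (Real.log 4 : ℂ) • 1 := by
  have hH : ρ₀.IsHermitian := h.1
  have hsa : IsSelfAdjoint ρ₀ := hH
  have hsmul : (4:ℂ)⁻¹ • ρ₀ = (4⁻¹ : ℝ) • ρ₀ := by
    rw [← algebraMap_smul ℂ (4⁻¹:ℝ) ρ₀, Complex.coe_algebraMap]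
    norm_num
  have hsa2 : IsSelfAdjoint ((4⁻¹:ℝ) • ρ₀) := IsSelfAdjoint.smul (star_trivial (4⁻¹:ℝ)) hsa
  have hH2 : ((4:ℂ)⁻¹ • ρ₀).IsHermitian := by rw [hsmul]; exact hsa2
  have hfin : (spectrum ℝ ρ₀).Finite := by
    rw [hH.spectrum_real_eq_range_eigenvalues]; exact Set.finite_range _
  rw [mlog, mlog, dif_pos hH2, dif_pos hH, ← hH2.cfc_eq, ← hH.cfc_eq]
  rw [hsmul]
  rw [← cfc_comp_smul (4⁻¹:ℝ) Real.log ρ₀ ((hfin.image _).continuousOn _) hsa]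
  have hcongr : cfc (fun x => Real.log ((4⁻¹:ℝ) • x)) ρ₀
      = cfc (fun x => Real.log x - Real.log 4) ρ₀ := by
    apply cfc_congr
    intro x hx
    rw [hH.spectrum_real_eq_range_eigenvalues] at hx
    obtain ⟨i, rfl⟩ := hx
    have hxpos : 0 < hH.eigenvalues i := h.eigenvalues_pos i
    simp only [smul_eq_mul]
    rw [Real.log_mul (by norm_num) hxpos.ne', Real.log_inv]
    ring
  rw [hcongr, cfc_sub Real.log (fun _ => Real.log 4) ρ₀ (hfin.continuousOn _) continuousOn_const,
    cfc_const _ _ hsa, Algebra.algebraMap_eq_smul_one, ← algebraMap_smul ℂ (Real.log 4) (1 : Matrix (Fin n) (Fin n) ℂ), Complex.coe_algebraMap]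


lemma relEnt_zero_left {n : ℕ} (σ : Matrix (Fin n) (Fin n) ℂ) : relEnt 0 σ = 0 := by
  simp [relEnt]

lemma relEnt_self {n : ℕ} (ρ : Matrix (Fin n) (Fin n) ℂ) : relEnt ρ ρ = 0 := by
  simp [relEnt]

lemma relEnt_quarter {n : ℕ} (ρ₀ : Matrix (Fin n) (Fin n) ℂ) (h : ρ₀.PosDef)
    (htr : ρ₀.trace = 1) : relEnt ρ₀ ((4:ℂ)⁻¹ • ρ₀) = 2 * Real.log 2 := by
  rw [relEnt, mlog_smul_inv4 ρ₀ h, sub_sub_cancel, mul_smul_comm, mul_one, trace_smul, htr,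
    smul_eq_mul, mul_one, Complex.ofReal_re, show (4:ℝ) = 2^2 by norm_num, Real.log_pow]
  push_cast
  ring

/-- with φ the state of density (1/4)(ρ₀⊕ρ₀⊕ρ₀⊕ρ₀) for a faithful density
matrix ρ₀, and φᵢ the state with density ρ₀ in the i-th block: φ = (1/4)Σᵢφᵢ, φ∘E = φ,
all restrictions φᵢ|N coincide, and the entropic disturbance
χ({1/4},{φᵢ}) − χ({1/4},{φᵢ|N}) equals 2 log 2. -/
theorem stmt15 {n : ℕ}
    (ρ₀ : Matrix (Fin n) (Fin n) ℂ) (hρ₀ : ρ₀.PosDef) (htr : ρ₀.trace = 1)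
    (φ : Fin 4 → Matrix (Fin n) (Fin n) ℂ) (hφ : φ = fun _ => (4 : ℂ)⁻¹ • ρ₀)
    (φs : Fin 4 → (Fin 4 → Matrix (Fin n) (Fin n) ℂ))
    (hφs : ∀ i, φs i = fun j => if j = i then ρ₀ else 0) :
    -- φ = (1/4) Σᵢ φᵢ
    (φ = (4 : ℂ)⁻¹ • ∑ i, φs i) ∧
    -- invariance φ∘E = φ
    (∀ X : Fin 4 → Matrix (Fin n) (Fin n) ℂ,
      ∑ j, (φ j * Eavg X j).trace = ∑ j, (φ j * X j).trace) ∧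
    -- the restrictions φᵢ|N all coincide
    (∀ i i', resD (φs i) = resD (φs i')) ∧
    -- the entropic disturbance equals 2 log 2
    ((∑ i, (1 / 4 : ℝ) * piRelEnt (φs i) φ)
      - (∑ i, (1 / 4 : ℝ) * relEnt (resD (φs i)) (resD φ)) = 2 * Real.log 2) := by
  have hres : ∀ i, resD (φs i) = ρ₀ := by
    intro i
    simp [resD, hφs, Finset.sum_ite_eq']
  have hsum : (∑ i, φs i) = fun _ => ρ₀ := by
    funext j
    simp only [Finset.sum_apply, hφs]
    simp [Finset.sum_ite_eq]
  refine ⟨?_, ?_, ?_, ?_⟩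
  · rw [hφ, hsum]
    funext j
    simp
  · intro X
    simp only [hφ, Eavg, Matrix.smul_mul, Matrix.mul_smul, trace_smul, Matrix.mul_sum,
      trace_sum, smul_eq_mul, Finset.mul_sum]
    simp only [Fin.sum_univ_four]
    ring
  · intro i i'
    rw [hres, hres]
  · have hresφ : resD φ = ρ₀ := by
      simp only [resD, hφ, Fin.sum_univ_four]
      module
    have hpi : ∀ i, piRelEnt (φs i) φ = 2 * Real.log 2 := by
      intro i
      have : ∀ j, relEnt (φs i j) (φ j) = if j = i then 2 * Real.log 2 else 0 := by
        intro j
        rw [hφs, hφ]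
        by_cases hji : j = i
        · simp only [hji, if_pos rfl]
          exact relEnt_quarter ρ₀ hρ₀ htr
        · simp only [if_neg hji]
          exact relEnt_zero_left _
      rw [piRelEnt]
      simp [this, Finset.sum_ite_eq']
    simp only [hpi, hres, hresφ, relEnt_self, mul_zero, Finset.sum_const, Finset.card_univ,
      Fintype.card_fin, nsmul_eq_mul, sub_zero]
    ring
end

section
/- If E₁ : M₁ → N₁ and E₂ : M₂ → N₂ are conditional expectations between finite-dimensional C*-algebras satisfying Pimsner-Popa bounds Eᵢ(X) ≥ λᵢX for all positive X, then E₁⊗E₂ : M₁⊗M₂ → N₁⊗N₂ is a conditional expectation satisfying (E₁⊗E₂)(Y) ≥ λ₁λ₂·Y for all positive Y ∈ M₁⊗M₂. -/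
open Matrix
open scoped ComplexOrder

open Kronecker

/-- The amplification of a linear map on Mₐ(ℂ) to Mₐ(ℂ) ⊗ Mᵣ(ℂ), acting as E ⊗ id. -/
noncomputable def amp {a : ℕ}
    (E : Matrix (Fin a) (Fin a) ℂ →ₗ[ℂ] Matrix (Fin a) (Fin a) ℂ) (r : ℕ)
    (M : Matrix (Fin a × Fin r) (Fin a × Fin r) ℂ) :
    Matrix (Fin a × Fin r) (Fin a × Fin r) ℂ :=
  fun p q => E (fun i j => M (i, p.2) (j, q.2)) p.1 q.1

/-- Complete positivity of a linear map on a matrix algebra. -/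
def IsCP {a : ℕ}
    (E : Matrix (Fin a) (Fin a) ℂ →ₗ[ℂ] Matrix (Fin a) (Fin a) ℂ) : Prop :=
  ∀ (r : ℕ) (M : Matrix (Fin a × Fin r) (Fin a × Fin r) ℂ),
    M.PosSemidef → (amp E r M).PosSemidef

section Aux

variable {a b : ℕ}

lemma amp_add (E : Matrix (Fin a) (Fin a) ℂ →ₗ[ℂ] Matrix (Fin a) (Fin a) ℂ) (r : ℕ)
    (M N : Matrix (Fin a × Fin r) (Fin a × Fin r) ℂ) :
    amp E r (M + N) = amp E r M + amp E r N := by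
  funext p q
  have h : (fun i j => (M + N) (i, p.2) (j, q.2)) =
      (fun i j => M (i, p.2) (j, q.2)) + (fun i j => N (i, p.2) (j, q.2)) := rfl
  show E _ p.1 q.1 = _
  rw [h]
  exact congrFun (congrFun (map_add E _ _) p.1) q.1

lemma amp_smul (E : Matrix (Fin a) (Fin a) ℂ →ₗ[ℂ] Matrix (Fin a) (Fin a) ℂ) (r : ℕ)
    (c : ℂ) (M : Matrix (Fin a × Fin r) (Fin a × Fin r) ℂ) :
    amp E r (c • M) = c • amp E r M := by
  funext p q
  have h : (fun i j => (c • M) (i, p.2) (j, q.2)) =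
      c • (fun i j => M (i, p.2) (j, q.2)) := rfl
  show E _ p.1 q.1 = _
  rw [h]
  exact congrFun (congrFun (_root_.map_smul E _ _) p.1) q.1

/-- `amp` as a linear map. -/
noncomputable def ampL (E : Matrix (Fin a) (Fin a) ℂ →ₗ[ℂ] Matrix (Fin a) (Fin a) ℂ) (r : ℕ) :
    Matrix (Fin a × Fin r) (Fin a × Fin r) ℂ →ₗ[ℂ] Matrix (Fin a × Fin r) (Fin a × Fin r) ℂ where
  toFun := amp E r
  map_add' := amp_add E r
  map_smul' := amp_smul E r

lemma amp_sub_smul_id (E : Matrix (Fin a) (Fin a) ℂ →ₗ[ℂ] Matrix (Fin a) (Fin a) ℂ)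
    (c : ℂ) (r : ℕ) (M : Matrix (Fin a × Fin r) (Fin a × Fin r) ℂ) :
    amp (E - c • LinearMap.id) r M = amp E r M - c • M := by
  funext p q
  show ((E - c • (LinearMap.id : Matrix (Fin a) (Fin a) ℂ →ₗ[ℂ] Matrix (Fin a) (Fin a) ℂ))
      (fun i j => M (i, p.2) (j, q.2))) p.1 q.1 = _
  rfl

/-- The amplification of a linear map on M_b(ℂ) acting as `id ⊗ E` on M_a ⊗ M_b. -/
noncomputable def amp2 (E : Matrix (Fin b) (Fin b) ℂ →ₗ[ℂ] Matrix (Fin b) (Fin b) ℂ) (a : ℕ)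
    (M : Matrix (Fin a × Fin b) (Fin a × Fin b) ℂ) :
    Matrix (Fin a × Fin b) (Fin a × Fin b) ℂ :=
  (amp E a (M.submatrix Prod.swap Prod.swap)).submatrix Prod.swap Prod.swap

lemma amp2_apply (E : Matrix (Fin b) (Fin b) ℂ →ₗ[ℂ] Matrix (Fin b) (Fin b) ℂ)
    (M : Matrix (Fin a × Fin b) (Fin a × Fin b) ℂ) (p q : Fin a × Fin b) :
    amp2 E a M p q = E (fun k l => M (p.1, k) (q.1, l)) p.2 q.2 := rfl

lemma amp2_posSemidef {E : Matrix (Fin b) (Fin b) ℂ →ₗ[ℂ] Matrix (Fin b) (Fin b) ℂ}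
    (hE : IsCP E) {M : Matrix (Fin a × Fin b) (Fin a × Fin b) ℂ} (hM : M.PosSemidef) :
    (amp2 E a M).PosSemidef :=
  ((hE a _ (hM.submatrix Prod.swap)).submatrix Prod.swap)

lemma amp2_add (E : Matrix (Fin b) (Fin b) ℂ →ₗ[ℂ] Matrix (Fin b) (Fin b) ℂ)
    (M N : Matrix (Fin a × Fin b) (Fin a × Fin b) ℂ) :
    amp2 E a (M + N) = amp2 E a M + amp2 E a N := by
  unfold amp2
  rw [show (M + N).submatrix Prod.swap Prod.swap =
      M.submatrix Prod.swap Prod.swap + N.submatrix Prod.swap Prod.swap from rfl, amp_add]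
  rfl

lemma amp2_smul (E : Matrix (Fin b) (Fin b) ℂ →ₗ[ℂ] Matrix (Fin b) (Fin b) ℂ)
    (c : ℂ) (M : Matrix (Fin a × Fin b) (Fin a × Fin b) ℂ) :
    amp2 E a (c • M) = c • amp2 E a M := by
  unfold amp2
  rw [show (c • M).submatrix Prod.swap Prod.swap =
      c • M.submatrix Prod.swap Prod.swap from rfl, amp_smul]
  rfl

/-- `amp2` as a linear map. -/
noncomputable def amp2L (E : Matrix (Fin b) (Fin b) ℂ →ₗ[ℂ] Matrix (Fin b) (Fin b) ℂ) (a : ℕ) :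
    Matrix (Fin a × Fin b) (Fin a × Fin b) ℂ →ₗ[ℂ] Matrix (Fin a × Fin b) (Fin a × Fin b) ℂ where
  toFun := amp2 E a
  map_add' := amp2_add E
  map_smul' := amp2_smul E

lemma amp2_sub_smul_id (E : Matrix (Fin b) (Fin b) ℂ →ₗ[ℂ] Matrix (Fin b) (Fin b) ℂ)
    (c : ℂ) (M : Matrix (Fin a × Fin b) (Fin a × Fin b) ℂ) :
    amp2 (E - c • LinearMap.id) a M = amp2 E a M - c • M := by
  funext p q
  rfl

lemma amp_kron (E : Matrix (Fin a) (Fin a) ℂ →ₗ[ℂ] Matrix (Fin a) (Fin a) ℂ)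
    (A : Matrix (Fin a) (Fin a) ℂ) (B : Matrix (Fin b) (Fin b) ℂ) :
    amp E b (A ⊗ₖ B) = (E A) ⊗ₖ B := by
  funext p q
  have h : (fun i j => (A ⊗ₖ B) (i, p.2) (j, q.2)) = B p.2 q.2 • A := by
    funext i j
    simp [Matrix.kroneckerMap_apply, mul_comm]
  show E _ p.1 q.1 = _
  rw [h, _root_.map_smul]
  simp [Matrix.kroneckerMap_apply, mul_comm]

lemma amp2_kron (E : Matrix (Fin b) (Fin b) ℂ →ₗ[ℂ] Matrix (Fin b) (Fin b) ℂ)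
    (A : Matrix (Fin a) (Fin a) ℂ) (B : Matrix (Fin b) (Fin b) ℂ) :
    amp2 E a (A ⊗ₖ B) = A ⊗ₖ (E B) := by
  funext p q
  have h : (fun k l => (A ⊗ₖ B) (p.1, k) (q.1, l)) = A p.1 q.1 • B := by
    funext k l
    simp [Matrix.kroneckerMap_apply]
  rw [amp2_apply, h, _root_.map_smul]
  simp [Matrix.kroneckerMap_apply]

/-- A standard basis matrix on a product index set is a Kronecker product. -/
lemma stdBasis_kron (p q : Fin a × Fin b) (c : ℂ) :
    single p q c =
      (single p.1 q.1 c) ⊗ₖ (single p.2 q.2 (1 : ℂ)) := by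
  ext ⟨i, k⟩ ⟨j, l⟩
  simp only [single, Matrix.kroneckerMap_apply, Matrix.of_apply, Prod.ext_iff]
  by_cases h1 : p.1 = i <;> by_cases h2 : p.2 = k <;> by_cases h3 : q.1 = j <;>
    by_cases h4 : q.2 = l <;> simp_all

/-- Two linear maps agreeing on all Kronecker products are equal. -/
lemma ext_kron
    (f g : Matrix (Fin a × Fin b) (Fin a × Fin b) ℂ →ₗ[ℂ]
      Matrix (Fin a × Fin b) (Fin a × Fin b) ℂ)
    (h : ∀ (A : Matrix (Fin a) (Fin a) ℂ) (B : Matrix (Fin b) (Fin b) ℂ),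
      f (A ⊗ₖ B) = g (A ⊗ₖ B))
    (M : Matrix (Fin a × Fin b) (Fin a × Fin b) ℂ) : f M = g M := by
  rw [Matrix.matrix_eq_sum_single M, map_sum, map_sum]
  refine Finset.sum_congr rfl fun p _ => ?_
  rw [map_sum, map_sum]
  refine Finset.sum_congr rfl fun q _ => ?_
  rw [stdBasis_kron, h]

lemma psd_smul {n : Type*} [Fintype n] {M : Matrix n n ℂ} (hM : M.PosSemidef)
    {c : ℝ} (hc : 0 ≤ c) : ((c : ℂ) • M).PosSemidef := by
  constructor
  · show ((c : ℂ) • M)ᴴ = _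
    rw [Matrix.conjTranspose_smul, hM.1.eq]
    simp [Complex.conj_ofReal]
  · intro x
    exact (hM.smul (show (0:ℂ) ≤ (c:ℂ) by exact_mod_cast hc)).2 x

end Aux

/-- if E₁ : M₁ → N₁ and E₂ : M₂ → N₂ are conditional expectations between
finite-dimensional C*-algebras (Mᵢ matrix algebras, Nᵢ star-subalgebras) satisfying
Pimsner–Popa bounds Eᵢ(X) ≥ λᵢX (with Eᵢ and Eᵢ − λᵢ·id completely positive), then
E₁⊗E₂ : M₁⊗M₂ → N₁⊗N₂ (determined on Kronecker products by
(E₁⊗E₂)(A ⊗ₖ B) = E₁(A) ⊗ₖ E₂(B)) is a conditional expectation satisfying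
(E₁⊗E₂)(Y) ≥ λ₁λ₂·Y for all positive Y. -/
theorem stmt17 {a b : ℕ}
    (N₁ : StarSubalgebra ℂ (Matrix (Fin a) (Fin a) ℂ))
    (N₂ : StarSubalgebra ℂ (Matrix (Fin b) (Fin b) ℂ))
    (E₁ : Matrix (Fin a) (Fin a) ℂ →ₗ[ℂ] Matrix (Fin a) (Fin a) ℂ)
    (E₂ : Matrix (Fin b) (Fin b) ℂ →ₗ[ℂ] Matrix (Fin b) (Fin b) ℂ)
    -- E₁, E₂ are conditional expectations onto N₁, N₂:
    (h1one : E₁ 1 = 1) (h2one : E₂ 1 = 1)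
    (h1range : ∀ X, E₁ X ∈ N₁) (h2range : ∀ X, E₂ X ∈ N₂)
    (h1fix : ∀ Y ∈ N₁, E₁ Y = Y) (h2fix : ∀ Y ∈ N₂, E₂ Y = Y)
    (h1bimod : ∀ A ∈ N₁, ∀ B ∈ N₁, ∀ X, E₁ (A * X * B) = A * E₁ X * B)
    (h2bimod : ∀ A ∈ N₂, ∀ B ∈ N₂, ∀ X, E₂ (A * X * B) = A * E₂ X * B)
    (h1cp : IsCP E₁) (h2cp : IsCP E₂)
    -- Pimsner–Popa bounds, with completely positive gaps Eᵢ − λᵢ·id: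
    (lam₁ lam₂ : ℝ) (hl₁ : 0 < lam₁) (hl₂ : 0 < lam₂)
    (h1gap : IsCP (E₁ - (lam₁ : ℂ) • LinearMap.id))
    (h2gap : IsCP (E₂ - (lam₂ : ℂ) • LinearMap.id))
    (h1pp : ∀ X : Matrix (Fin a) (Fin a) ℂ, X.PosSemidef →
      (E₁ X - (lam₁ : ℂ) • X).PosSemidef)
    (h2pp : ∀ X : Matrix (Fin b) (Fin b) ℂ, X.PosSemidef →
      (E₂ X - (lam₂ : ℂ) • X).PosSemidef)
    -- the tensor product map E₁⊗E₂:
    (E12 : Matrix (Fin a × Fin b) (Fin a × Fin b) ℂ →ₗ[ℂ]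
      Matrix (Fin a × Fin b) (Fin a × Fin b) ℂ)
    (hE12 : ∀ (A : Matrix (Fin a) (Fin a) ℂ) (B : Matrix (Fin b) (Fin b) ℂ),
      E12 (A ⊗ₖ B) = (E₁ A) ⊗ₖ (E₂ B)) :
    -- E₁⊗E₂ is a conditional expectation:
    (E12 1 = 1) ∧
    (∀ Y : Matrix (Fin a × Fin b) (Fin a × Fin b) ℂ, Y.PosSemidef → (E12 Y).PosSemidef) ∧
    (∀ C₁ ∈ N₁, ∀ C₂ ∈ N₂, ∀ D₁ ∈ N₁, ∀ D₂ ∈ N₂,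
      ∀ Y : Matrix (Fin a × Fin b) (Fin a × Fin b) ℂ,
      E12 ((C₁ ⊗ₖ C₂) * Y * (D₁ ⊗ₖ D₂)) = (C₁ ⊗ₖ C₂) * E12 Y * (D₁ ⊗ₖ D₂)) ∧
    (∀ Y ∈ Set.range (fun p : N₁ × N₂ => (p.1 : Matrix (Fin a) (Fin a) ℂ) ⊗ₖ (p.2 : Matrix (Fin b) (Fin b) ℂ)), E12 Y = Y) ∧
    -- the Pimsner–Popa bound with constant λ₁λ₂:
    (∀ Y : Matrix (Fin a × Fin b) (Fin a × Fin b) ℂ, Y.PosSemidef →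
      (E12 Y - ((lam₁ * lam₂ : ℝ) : ℂ) • Y).PosSemidef) := by
  -- key identity : E12 = (E₁ ⊗ id) ∘ (id ⊗ E₂)
  have key : ∀ M, E12 M = amp E₁ b (amp2 E₂ a M) := by
    intro M
    have := ext_kron E12 ((ampL E₁ b).comp (amp2L E₂ a)) (fun A B => by
      simp only [LinearMap.comp_apply, hE12]
      show _ = amp E₁ b (amp2 E₂ a (A ⊗ₖ B))
      rw [amp2_kron, amp_kron]) M
    exact this
  refine ⟨?_, ?_, ?_, ?_, ?_⟩
  · rw [← Matrix.one_kronecker_one (α := ℂ) (m := Fin a) (n := Fin b), hE12, h1one, h2one,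
      Matrix.one_kronecker_one]
  · intro Y hY
    rw [key]
    exact h1cp b _ (amp2_posSemidef h2cp hY)
  · intro C₁ hC₁ C₂ hC₂ D₁ hD₁ D₂ hD₂ Y
    have := ext_kron
      (E12.comp ((LinearMap.mulRight ℂ (D₁ ⊗ₖ D₂)).comp (LinearMap.mulLeft ℂ (C₁ ⊗ₖ C₂))))
      ((LinearMap.mulRight ℂ (D₁ ⊗ₖ D₂)).comp ((LinearMap.mulLeft ℂ (C₁ ⊗ₖ C₂)).comp E12))
      (fun A B => by
        simp only [LinearMap.comp_apply, LinearMap.mulLeft_apply, LinearMap.mulRight_apply]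
        rw [← Matrix.mul_kronecker_mul, ← Matrix.mul_kronecker_mul, hE12, hE12,
          h1bimod C₁ hC₁ D₁ hD₁, h2bimod C₂ hC₂ D₂ hD₂,
          Matrix.mul_kronecker_mul, Matrix.mul_kronecker_mul]) Y
    simpa only [LinearMap.comp_apply, LinearMap.mulLeft_apply, LinearMap.mulRight_apply]
      using this
  · rintro Y ⟨⟨n1, n2⟩, rfl⟩
    simp only
    rw [hE12, h1fix _ n1.2, h2fix _ n2.2]
  · intro Y hY
    set Z := amp2 E₂ a Y with hZdef
    have hZ : Z.PosSemidef := amp2_posSemidef h2cp hY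
    have t1 : (amp E₁ b Z - (lam₁ : ℂ) • Z).PosSemidef := by
      have := h1gap b Z hZ
      rwa [amp_sub_smul_id] at this
    have t2 : (Z - (lam₂ : ℂ) • Y).PosSemidef := by
      have := amp2_posSemidef h2gap hY
      rwa [amp2_sub_smul_id] at this
    have t2' : ((lam₁ : ℂ) • (Z - (lam₂ : ℂ) • Y)).PosSemidef := psd_smul t2 hl₁.le
    have hcast : ((lam₁ * lam₂ : ℝ) : ℂ) = (lam₁ : ℂ) * (lam₂ : ℂ) := by push_cast; ring
    have heq : E12 Y - ((lam₁ * lam₂ : ℝ) : ℂ) • Y =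
        (amp E₁ b Z - (lam₁ : ℂ) • Z) + (lam₁ : ℂ) • (Z - (lam₂ : ℂ) • Y) := by
      rw [key, hcast]
      module
    rw [heq]
    exact t1.add t2'
end
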